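/- arXiv:2206.15029 — 8 statements merged into one kernel-verified Lean document; each statement's English description precedes it below -/
import Mathlib

section
/- For every d ≥ 1 and every d-tuple of integers a = (a_1,…,a_d), the refined Ehrhart series of the d-dimensional cross-polytope satisfies, in the power series ring (ℤ[q,q⁻¹])[[t]]: E^a_{Ξ_d}(t,q) · ∏_{j=1}^d (1−q^{a_j} t)(1−q^{−a_j} t) = (1+t)^d (1−t)^{d−1}. -/
open LaurentPolynomial PowerSeries Finset


/-- The refined Ehrhart series of the `d`-dimensional cross-polytope with respect to an
integer weight vector `a`: the coefficient of `t^r` is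
`∑_{v ∈ ℤ^d, |v₁|+⋯+|v_d| ≤ r} q^{v·a}`, a Laurent polynomial in `q`. -/
noncomputable def refinedEhrhartCross (d : ℕ) (a : Fin d → ℤ) :
    PowerSeries (LaurentPolynomial ℤ) :=
  PowerSeries.mk fun r : ℕ =>
    ∑ v ∈ (Fintype.piFinset fun _ : Fin d => Finset.Icc (-(r : ℤ)) (r : ℤ)).filter
        (fun v => ∑ i, |v i| ≤ (r : ℤ)),
      LaurentPolynomial.T (∑ i, v i * a i)

noncomputable def geomT (c : ℤ) : PowerSeries (LaurentPolynomial ℤ) :=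
  PowerSeries.mk fun n => LaurentPolynomial.T ((n : ℤ) * c)

noncomputable def oneDim (c : ℤ) : PowerSeries (LaurentPolynomial ℤ) :=
  geomT c + geomT (-c) - 1

lemma geomT_mul (c : ℤ) :
    (1 - PowerSeries.C (R := LaurentPolynomial ℤ) (LaurentPolynomial.T c) * PowerSeries.X) * geomT c = 1 := by
  ext n
  rw [sub_mul, one_mul, mul_assoc, map_sub]
  cases n with
  | zero => simp [geomT]
  | succ n =>
    rw [PowerSeries.coeff_C_mul, PowerSeries.coeff_succ_X_mul]
    simp only [geomT, PowerSeries.coeff_mk, PowerSeries.coeff_one, Nat.succ_ne_zero, if_false]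
    rw [← LaurentPolynomial.T_add, show ((n+1 : ℕ) : ℤ) * c = c + (n : ℤ) * c by push_cast; ring,
      sub_self]

lemma oneDim_mul (c : ℤ) :
    oneDim c * ((1 - PowerSeries.C (R := LaurentPolynomial ℤ) (LaurentPolynomial.T c) * PowerSeries.X) *
      (1 - PowerSeries.C (R := LaurentPolynomial ℤ) (LaurentPolynomial.T (-c)) * PowerSeries.X)) =
    1 - PowerSeries.X ^ 2 := by
  have hu := geomT_mul c
  have hv := geomT_mul (-c)
  have huv : PowerSeries.C (R := LaurentPolynomial ℤ) (LaurentPolynomial.T c) *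
      PowerSeries.C (R := LaurentPolynomial ℤ) (LaurentPolynomial.T (-c)) = 1 := by
    rw [← map_mul, ← LaurentPolynomial.T_add, add_neg_cancel, LaurentPolynomial.T_zero, map_one]
  unfold oneDim
  linear_combination (1 - PowerSeries.C (R := LaurentPolynomial ℤ) (LaurentPolynomial.T (-c)) * PowerSeries.X) * hu +
    (1 - PowerSeries.C (R := LaurentPolynomial ℤ) (LaurentPolynomial.T c) * PowerSeries.X) * hv -
    PowerSeries.X ^ 2 * huv

/-- bound independence -/
lemma filter_eq (d : ℕ) (r R : ℕ) (h : r ≤ R) :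
    (Fintype.piFinset fun _ : Fin d => Finset.Icc (-(r : ℤ)) (r : ℤ)).filter
        (fun v => ∑ i, |v i| ≤ (r : ℤ)) =
    (Fintype.piFinset fun _ : Fin d => Finset.Icc (-(R : ℤ)) (R : ℤ)).filter
        (fun v => ∑ i, |v i| ≤ (r : ℤ)) := by
  ext v
  simp only [Finset.mem_filter, Fintype.mem_piFinset, Finset.mem_Icc, ← abs_le]
  constructor <;> rintro ⟨hb, hs⟩ <;> refine ⟨fun i => ?_, hs⟩ <;>
    have := Finset.single_le_sum (f := fun i => |v i|) (fun i _ => abs_nonneg _) (Finset.mem_univ i)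
  · exact le_trans (le_trans this hs) (by exact_mod_cast Nat.cast_le.mpr h)
  · exact le_trans this hs

lemma coeff_EC (d : ℕ) (a : Fin d → ℤ) (r : ℕ) :
    (PowerSeries.coeff r) (refinedEhrhartCross d a) =
    ∑ v ∈ (Fintype.piFinset fun _ : Fin d => Finset.Icc (-(r : ℤ)) (r : ℤ)).filter
        (fun v => ∑ i, |v i| ≤ (r : ℤ)),
      LaurentPolynomial.T (∑ i, v i * a i) := by
  simp [refinedEhrhartCross]

lemma oneDim_coeff (c : ℤ) (k : ℕ) :
    (PowerSeries.coeff k) (oneDim c) =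
      if k = 0 then 1 else LaurentPolynomial.T ((k:ℤ)*c) + LaurentPolynomial.T (-((k:ℤ)*c)) := by
  simp only [oneDim, map_sub, map_add, geomT, PowerSeries.coeff_mk, PowerSeries.coeff_one]
  split
  · next h => subst h; simp
  · next _ => rw [sub_zero, mul_neg]

lemma key (d : ℕ) (r : ℕ) (a : Fin (d+1) → ℤ) :
    ∑ v ∈ (Fintype.piFinset fun _ : Fin (d+1) => Finset.Icc (-(r : ℤ)) (r : ℤ)).filter
        (fun v => ∑ i, |v i| ≤ (r : ℤ)),
      LaurentPolynomial.T (R := ℤ) (∑ i, v i * a i) =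
    ∑ m ∈ Finset.Icc (-(r : ℤ)) (r : ℤ), LaurentPolynomial.T (m * a 0) *
      ∑ w ∈ (Fintype.piFinset fun _ : Fin d =>
            Finset.Icc (-((r - m.natAbs : ℕ) : ℤ)) ((r - m.natAbs : ℕ) : ℤ)).filter
          (fun w => ∑ i, |w i| ≤ ((r - m.natAbs : ℕ) : ℤ)),
        LaurentPolynomial.T (∑ i, w i * a i.succ) := by
  have hb : ∀ m : ℤ, r - m.natAbs ≤ r := fun m => Nat.sub_le _ _
  conv_rhs => rw [Finset.sum_congr rfl (fun m _ => by
    rw [filter_eq d (r - m.natAbs) r (hb m), Finset.mul_sum])]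
  simp only [← LaurentPolynomial.T_add]
  conv_rhs => rw [Finset.sum_sigma']
  refine Finset.sum_nbij' (fun v => ⟨v 0, fun i => v i.succ⟩) (fun p => Fin.cons p.1 p.2)
    ?_ ?_ ?_ ?_ ?_
  · rintro v hv
    simp only [Finset.mem_filter, Fintype.mem_piFinset, Finset.mem_Icc] at hv
    obtain ⟨h1, h2⟩ := hv
    have h0 : |v 0| ≤ (r : ℤ) := by
      refine le_trans ?_ h2
      exact Finset.single_le_sum (f := fun i => |v i|) (fun i _ => abs_nonneg _) (Finset.mem_univ 0)
    have hna : (v 0).natAbs ≤ r := by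
      rwa [Int.abs_eq_natAbs, Int.ofNat_le] at h0
    have hcast : ((r - (v 0).natAbs : ℕ) : ℤ) = (r : ℤ) - |v 0| := by
      rw [Int.abs_eq_natAbs]; omega
    simp only [Finset.mem_sigma, Finset.mem_filter, Fintype.mem_piFinset, Finset.mem_Icc]
    refine ⟨⟨by linarith [abs_le.mp h0], (abs_le.mp h0).2⟩, fun i => h1 _, ?_⟩
    rw [hcast]
    have := Fin.sum_univ_succ (fun i => |v i|)
    linarith [h2, this.symm.le]
  · rintro ⟨m, w⟩ hp
    simp only [Finset.mem_sigma, Finset.mem_filter, Fintype.mem_piFinset, Finset.mem_Icc] at hp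
    obtain ⟨hm, hw, hs⟩ := hp
    have hna : m.natAbs ≤ r := by
      rcases hm with ⟨hm1, hm2⟩; omega
    have hcast : ((r - m.natAbs : ℕ) : ℤ) = (r : ℤ) - |m| := by
      rw [Int.abs_eq_natAbs]; omega
    rw [hcast] at hs
    simp only [Finset.mem_filter, Fintype.mem_piFinset, Finset.mem_Icc]
    have habs : |m| ≤ (r:ℤ) := abs_le.mpr hm
    constructor
    · intro i
      refine Fin.cases ?_ ?_ i
      · simpa using hm
      · intro j
        simpa only [Fin.cons_succ] using hw j
    · rw [Fin.sum_univ_succ]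
      simp only [Fin.cons_zero, Fin.cons_succ]
      linarith
  · intro v _
    exact Fin.cons_self_tail v
  · rintro ⟨m, w⟩ _
    simp [Fin.cons_zero, Fin.cons_succ]
  · intro v _
    rw [Fin.sum_univ_succ]

lemma sum_Icc_int (r : ℕ) (f : ℤ → LaurentPolynomial ℤ) :
    ∑ m ∈ Finset.Icc (-(r:ℤ)) (r:ℤ), f m =
      ∑ k ∈ Finset.range (r+1), f k + ∑ k ∈ Finset.range r, f (-((k:ℤ)+1)) := by
  have hsplit : Finset.Icc (-(r:ℤ)) (r:ℤ) = Finset.Icc (0:ℤ) r ∪ Finset.Icc (-(r:ℤ)) (-1) := by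
    ext m; simp only [Finset.mem_Icc, Finset.mem_union]; omega
  rw [hsplit, Finset.sum_union (by
    simp only [Finset.disjoint_left, Finset.mem_Icc]; intro x h1 h2; omega)]
  congr 1
  · refine Finset.sum_nbij' Int.toNat (fun k => (k:ℤ)) ?_ ?_ ?_ ?_ ?_
    · intro x hx; simp only [Finset.mem_Icc] at hx; simp only [Finset.mem_range]; omega
    · intro x hx; simp only [Finset.mem_range] at hx; simp only [Finset.mem_Icc]; omega
    · intro x hx; simp only [Finset.mem_Icc] at hx; omega
    · intro x hx; simp
    · intro x hx; simp only [Finset.mem_Icc] at hx; congr 1; omega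
  · refine Finset.sum_nbij' (fun m => (-m-1).toNat) (fun k => -((k:ℤ)+1)) ?_ ?_ ?_ ?_ ?_
    · intro x hx; simp only [Finset.mem_Icc] at hx; simp only [Finset.mem_range]; omega
    · intro x hx; simp only [Finset.mem_range] at hx; simp only [Finset.mem_Icc]; omega
    · intro x hx; simp only [Finset.mem_Icc] at hx; omega
    · intro x hx; simp only [Finset.mem_range] at hx; omega
    · intro x hx; simp only [Finset.mem_Icc] at hx; congr 1; omega

lemma combine (r : ℕ) (c : ℤ) (S : ℕ → LaurentPolynomial ℤ) :
    ∑ m ∈ Finset.Icc (-(r:ℤ)) (r:ℤ), LaurentPolynomial.T (m * c) * S (r - m.natAbs) =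
    ∑ k ∈ Finset.range (r+1),
      (if k = 0 then 1 else LaurentPolynomial.T ((k:ℤ)*c) + LaurentPolynomial.T (-((k:ℤ)*c))) *
        S (r - k) := by
  calc ∑ m ∈ Finset.Icc (-(r:ℤ)) (r:ℤ), LaurentPolynomial.T (m * c) * S (r - m.natAbs)
      = ∑ k ∈ Finset.range (r+1),
          (fun m : ℤ => LaurentPolynomial.T (m * c) * S (r - m.natAbs)) (k:ℤ) +
        ∑ k ∈ Finset.range r,
          (fun m : ℤ => LaurentPolynomial.T (m * c) * S (r - m.natAbs)) (-((k:ℤ)+1)) :=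
        sum_Icc_int r _
    _ = (∑ k ∈ Finset.range (r+1), LaurentPolynomial.T ((k:ℤ)*c) * S (r-k)) +
        ∑ k ∈ Finset.range r,
          (if k + 1 = 0 then 0 else LaurentPolynomial.T (-(((k+1:ℕ):ℤ)*c)) * S (r-(k+1))) := by
        refine congrArg₂ (· + ·) (Finset.sum_congr rfl fun k _ => by simp)
          (Finset.sum_congr rfl fun k _ => ?_)
        rw [if_neg (Nat.succ_ne_zero k)]
        show LaurentPolynomial.T ((-((k:ℤ)+1)) * c) * S (r - (-((k:ℤ)+1)).natAbs) = _
        rw [show (-((k:ℤ)+1)) * c = -(((k+1:ℕ):ℤ)*c) by push_cast; ring,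
            show r - (-((k:ℤ)+1)).natAbs = r - (k+1) by omega]
    _ = (∑ k ∈ Finset.range (r+1), LaurentPolynomial.T ((k:ℤ)*c) * S (r-k)) +
        ∑ k ∈ Finset.range (r+1),
          (if k = 0 then 0 else LaurentPolynomial.T (-((k:ℤ)*c)) * S (r-k)) := by
        congr 1
        rw [Finset.sum_range_succ'
          (fun k => if k = 0 then 0 else LaurentPolynomial.T (-((k:ℤ)*c)) * S (r-k)) r]
        simp
    _ = ∑ k ∈ Finset.range (r+1),
          (if k = 0 then 1 else LaurentPolynomial.T ((k:ℤ)*c) + LaurentPolynomial.T (-((k:ℤ)*c))) *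
            S (r - k) := by
        rw [← Finset.sum_add_distrib]
        refine Finset.sum_congr rfl fun k _ => ?_
        rcases Nat.eq_zero_or_pos k with h | h
        · subst h; simp
        · rw [if_neg h.ne', if_neg h.ne', add_mul]

lemma step (d : ℕ) (a : Fin (d+1) → ℤ) :
    refinedEhrhartCross (d+1) a = oneDim (a 0) * refinedEhrhartCross d (fun i => a i.succ) := by
  refine PowerSeries.ext fun r => ?_
  rw [coeff_EC, key d r a, PowerSeries.coeff_mul,
    Finset.Nat.sum_antidiagonal_eq_sum_range_succ_mk]
  simp only [oneDim_coeff, coeff_EC]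
  exact combine r (a 0) (fun s =>
    ∑ w ∈ (Fintype.piFinset fun _ : Fin d => Finset.Icc (-(s : ℤ)) (s : ℤ)).filter
        (fun w => ∑ i, |w i| ≤ (s : ℤ)),
      LaurentPolynomial.T (∑ i, w i * a i.succ))

lemma mk_one_inv : (1 - PowerSeries.X (R := LaurentPolynomial ℤ)) *
    PowerSeries.mk (fun _ : ℕ => (1 : LaurentPolynomial ℤ)) = 1 := by
  ext n
  rw [sub_mul, one_mul, map_sub]
  cases n with
  | zero => simp
  | succ n => rw [PowerSeries.coeff_succ_X_mul]; simp

lemma base (a : Fin 0 → ℤ) :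
    refinedEhrhartCross 0 a = PowerSeries.mk (fun _ : ℕ => (1 : LaurentPolynomial ℤ)) := by
  ext r
  simp [refinedEhrhartCross, Finset.filter_true_of_mem]

lemma mainX (d : ℕ) (a : Fin d → ℤ) :
    refinedEhrhartCross d a *
      (∏ j, ((1 - PowerSeries.C (R := LaurentPolynomial ℤ) (LaurentPolynomial.T (a j)) *
              PowerSeries.X) *
            (1 - PowerSeries.C (R := LaurentPolynomial ℤ) (LaurentPolynomial.T (-(a j))) *
              PowerSeries.X))) * (1 - PowerSeries.X) =
    (1 - PowerSeries.X ^ 2) ^ d := by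
  induction d with
  | zero =>
    rw [base a]
    simp only [Finset.univ_eq_empty, Finset.prod_empty, mul_one, pow_zero]
    rw [mul_comm]; exact mk_one_inv
  | succ d ih =>
    rw [step d a, Fin.prod_univ_succ]
    have h1 := oneDim_mul (a 0)
    have h2 := ih (fun i => a i.succ)
    linear_combination (refinedEhrhartCross d (fun i => a i.succ) *
        (∏ j : Fin d, ((1 - PowerSeries.C (R := LaurentPolynomial ℤ) (LaurentPolynomial.T (a j.succ)) *
              PowerSeries.X) *
            (1 - PowerSeries.C (R := LaurentPolynomial ℤ) (LaurentPolynomial.T (-(a j.succ))) *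
              PowerSeries.X))) * (1 - PowerSeries.X)) * h1 +
      (1 - PowerSeries.X ^ 2) * h2

/-- For every `d ≥ 1` and every `d`-tuple of integers `a`, the refined Ehrhart series of the
`d`-dimensional cross-polytope satisfies
`E^a_{Ξ_d}(t,q) · ∏_{j=1}^d (1−q^{a_j} t)(1−q^{−a_j} t) = (1+t)^d (1−t)^{d−1}`. -/
theorem refinedEhrhart_cross (d : ℕ) (hd : 1 ≤ d) (a : Fin d → ℤ) :
    refinedEhrhartCross d a *
      ∏ j, ((1 - PowerSeries.C (R := LaurentPolynomial ℤ) (LaurentPolynomial.T (a j)) *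
              PowerSeries.X) *
            (1 - PowerSeries.C (R := LaurentPolynomial ℤ) (LaurentPolynomial.T (-(a j))) *
              PowerSeries.X)) =
    (1 + PowerSeries.X) ^ d * (1 - PowerSeries.X) ^ (d - 1) := by
  obtain ⟨e, rfl⟩ : ∃ e, d = e + 1 := ⟨d - 1, (Nat.succ_pred_eq_of_pos hd).symm⟩
  rw [Nat.add_sub_cancel]
  have hM := mainX (e+1) a
  have hinv := mk_one_inv
  have h2 : (1 - PowerSeries.X ^ 2 : PowerSeries (LaurentPolynomial ℤ)) ^ (e+1) =
      (1 + PowerSeries.X) ^ (e+1) * (1 - PowerSeries.X) ^ e * (1 - PowerSeries.X) := by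
    rw [show (1 - PowerSeries.X ^ 2 : PowerSeries (LaurentPolynomial ℤ)) =
      (1 + PowerSeries.X) * (1 - PowerSeries.X) by ring, mul_pow, pow_succ]
    ring
  linear_combination PowerSeries.mk (fun _ : ℕ => (1 : LaurentPolynomial ℤ)) * hM +
    PowerSeries.mk (fun _ : ℕ => (1 : LaurentPolynomial ℤ)) * h2 +
    ((1 + PowerSeries.X) ^ (e+1) * (1 - PowerSeries.X) ^ e -
      refinedEhrhartCross (e+1) a *
        ∏ j, ((1 - PowerSeries.C (R := LaurentPolynomial ℤ) (LaurentPolynomial.T (a j)) *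
                PowerSeries.X) *
              (1 - PowerSeries.C (R := LaurentPolynomial ℤ) (LaurentPolynomial.T (-(a j))) *
                PowerSeries.X))) * hinv
end

section
/- For every d ≥ 1, the refined Ehrhart series of the d-dimensional cross-polytope for the weight vector a = (0,…,0,1) satisfies, in the power series ring (ℤ[q,q⁻¹])[[t]]: E^{(0,…,0,1)}_{Ξ_d}(t,q) · (1−qt)(1−q⁻¹t)(1−t)^{d−1} = (1+t)^d. -/
open PowerSeries LaurentPolynomial Finset

namespace RefinedEhrhartAux

abbrev R := LaurentPolynomial ℤ

/-- The lattice points of the `r`-dilate of the `d`-dimensional cross-polytope. -/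
noncomputable def ball (d r : ℕ) : Finset (Fin d → ℤ) :=
  (Fintype.piFinset fun _ : Fin d => Finset.Icc (-(r : ℤ)) (r : ℤ)).filter
    (fun v => ∑ i, |v i| ≤ (r : ℤ))

lemma mem_ball {d r : ℕ} {v : Fin d → ℤ} :
    v ∈ ball d r ↔ (∀ i, -(r:ℤ) ≤ v i ∧ v i ≤ r) ∧ ∑ i, |v i| ≤ (r : ℤ) := by
  simp [ball, Fintype.mem_piFinset, Finset.mem_Icc]

lemma mem_ball' {d r : ℕ} {v : Fin d → ℤ} :
    v ∈ ball d r ↔ ∑ i, |v i| ≤ (r : ℤ) := by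
  rw [mem_ball]
  constructor
  · exact fun h => h.2
  · intro h
    refine ⟨fun i => abs_le.mp (le_trans ?_ h), h⟩
    exact Finset.single_le_sum (fun j _ => abs_nonneg (v j)) (Finset.mem_univ i)

/-- Number of lattice points in the `r`-dilate of the `d`-dimensional cross-polytope. -/
noncomputable def cnt (d r : ℕ) : ℕ := (ball d r).card

noncomputable def N (d : ℕ) : PowerSeries R := PowerSeries.mk fun r => (cnt d r : R)

/-- The single-coordinate weight series. -/
noncomputable def ser (g : ℤ → R) : PowerSeries R :=
  PowerSeries.mk fun j => if j = 0 then g 0 else g j + g (-(j:ℤ))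

lemma cnt_zero (r : ℕ) : cnt 0 r = 1 := by
  rw [cnt]
  have : ball 0 r = {(fun _ => 0 : Fin 0 → ℤ)} := by
    ext v
    simp only [mem_ball', Finset.mem_singleton]
    constructor
    · intro _; ext i; exact absurd i.2 (by omega)
    · intro h; simp [h]
  simp [this]

/-- Splitting off the last coordinate. -/
lemma ball_succ_sum (d r : ℕ) (g : ℤ → R) :
    ∑ v ∈ ball (d+1) r, g (v (Fin.last d)) =
    ∑ k ∈ Finset.Icc (-(r:ℤ)) (r:ℤ), (cnt d (r - k.natAbs) : R) * g k := by
  have hr : ∀ k ∈ Finset.Icc (-(r:ℤ)) (r:ℤ),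
      ((r - k.natAbs : ℕ) : ℤ) = (r : ℤ) - |k| := by
    intro k hk
    rw [Finset.mem_Icc] at hk
    have h1 : k.natAbs ≤ r := by omega
    have h2 : |k| = (k.natAbs : ℤ) := Int.abs_eq_natAbs k
    omega
  calc ∑ v ∈ ball (d+1) r, g (v (Fin.last d))
      = ∑ p ∈ (Finset.Icc (-(r:ℤ)) (r:ℤ)).sigma (fun k => ball d (r - k.natAbs)),
          g p.1 := by
        refine Finset.sum_nbij' (fun v => ⟨v (Fin.last d), Fin.init v⟩)
          (fun p => Fin.snoc p.2 p.1) ?_ ?_ ?_ ?_ ?_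
        · intro v hv
          rw [mem_ball'] at hv
          rw [Fin.sum_univ_castSucc] at hv
          have hnn : (0:ℤ) ≤ ∑ i : Fin d, |v i.castSucc| :=
            Finset.sum_nonneg fun i _ => abs_nonneg _
          have habs : |v (Fin.last d)| ≤ (r:ℤ) := by omega
          have hmem : v (Fin.last d) ∈ Finset.Icc (-(r:ℤ)) (r:ℤ) := by
            rw [Finset.mem_Icc]
            rcases abs_le.mp habs with ⟨ha, hb⟩
            exact ⟨ha, hb⟩
          rw [Finset.mem_sigma]
          refine ⟨hmem, ?_⟩
          rw [mem_ball', hr _ hmem]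
          have he : ∑ i : Fin d, |Fin.init v i| = ∑ i : Fin d, |v i.castSucc| := rfl
          have h2 : |v (Fin.last d)| = ((v (Fin.last d)).natAbs : ℤ) :=
            Int.abs_eq_natAbs _
          rw [he]
          omega
        · intro p hp
          rw [Finset.mem_sigma] at hp
          obtain ⟨hk, hw⟩ := hp
          rw [mem_ball'] at hw ⊢
          rw [hr _ hk] at hw
          rw [Fin.sum_univ_castSucc]
          have h1 : ∀ i : Fin d, (Fin.snoc p.2 p.1 : Fin (d+1) → ℤ) i.castSucc = p.2 i :=
            fun i => Fin.snoc_castSucc _ _ _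
          have h2 : (Fin.snoc p.2 p.1 : Fin (d+1) → ℤ) (Fin.last d) = p.1 :=
            Fin.snoc_last _ _
          have hk' : |p.1| ≤ (r:ℤ) := by
            rw [Finset.mem_Icc] at hk; rw [abs_le]; exact hk
          simp only [h1, h2]
          omega
        · intro v _
          exact funext fun i => congrFun (Fin.snoc_init_self v) i
        · intro p _
          apply Sigma.ext <;> simp [Fin.init_snoc]
        · intro v _; rfl
      _ = ∑ k ∈ Finset.Icc (-(r:ℤ)) (r:ℤ), ∑ _w ∈ ball d (r - k.natAbs), g k := by
        rw [Finset.sum_sigma]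
      _ = ∑ k ∈ Finset.Icc (-(r:ℤ)) (r:ℤ), (cnt d (r - k.natAbs) : R) * g k := by
        refine Finset.sum_congr rfl fun k _ => ?_
        rw [Finset.sum_const, cnt, nsmul_eq_mul]

lemma sum_Icc_abs {M : Type*} [AddCommMonoid M] (f : ℤ → M) (r : ℕ) :
    ∑ k ∈ Finset.Icc (-(r:ℤ)) (r:ℤ), f k =
      f 0 + ∑ j ∈ Finset.range r, (f ((j:ℤ)+1) + f (-((j:ℤ)+1))) := by
  induction r with
  | zero => simp
  | succ r ih =>
    have hset : Finset.Icc (-((r+1:ℕ):ℤ)) ((r+1:ℕ):ℤ) =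
        insert (-((r:ℤ)+1)) (insert ((r:ℤ)+1) (Finset.Icc (-(r:ℤ)) (r:ℤ))) := by
      ext k
      simp only [Finset.mem_Icc, Finset.mem_insert]
      omega
    rw [hset, Finset.sum_insert (by simp only [Finset.mem_insert, Finset.mem_Icc]; omega),
      Finset.sum_insert (by simp only [Finset.mem_Icc]; omega), ih,
      Finset.sum_range_succ]
    push_cast
    abel

/-- The convolution identity: splitting the last coordinate of the cross-polytope. -/
lemma conv (d : ℕ) (g : ℤ → R) :
    PowerSeries.mk (fun r => ∑ v ∈ ball (d+1) r, g (v (Fin.last d))) = ser g * N d := by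
  refine PowerSeries.ext fun n => ?_
  rw [PowerSeries.coeff_mk, PowerSeries.coeff_mul,
    Finset.Nat.sum_antidiagonal_eq_sum_range_succ_mk, ball_succ_sum, sum_Icc_abs,
    Finset.sum_range_succ']
  simp only [ser, N, PowerSeries.coeff_mk]
  have hz : (cnt d (n - (0:ℤ).natAbs) : R) * g 0 =
      (if (0:ℕ) = 0 then g 0 else g 0 + g (-(0:ℤ))) * (cnt d (n - 0) : R) := by
    simp [mul_comm]
  have hs : ∑ j ∈ Finset.range n,
        ((cnt d (n - ((j:ℤ)+1).natAbs) : R) * g ((j:ℤ)+1)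
          + (cnt d (n - (-((j:ℤ)+1)).natAbs) : R) * g (-((j:ℤ)+1))) =
      ∑ j ∈ Finset.range n,
        (if j + 1 = 0 then g 0 else g ((j+1 : ℕ):ℤ) + g (-((j+1:ℕ):ℤ)))
          * (cnt d (n - (j+1)) : R) := by
    refine Finset.sum_congr rfl fun j _ => ?_
    have h1 : (((j:ℤ)+1)).natAbs = j + 1 := by omega
    have h2 : ((-((j:ℤ)+1))).natAbs = j + 1 := by omega
    rw [h1, h2, if_neg (Nat.succ_ne_zero j)]
    push_cast
    ring
  rw [hz, hs, add_comm]
  simp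

lemma coeff_mul_one_sub_zero (f : PowerSeries R) (a : R) :
    (PowerSeries.coeff (R := R) 0) (f * (1 - PowerSeries.C (R := R) a * PowerSeries.X)) =
      PowerSeries.coeff (R := R) 0 f := by
  rw [PowerSeries.coeff_zero_eq_constantCoeff, map_mul, map_sub, map_mul,
    PowerSeries.constantCoeff_X]
  simp

lemma coeff_mul_one_sub_succ (f : PowerSeries R) (a : R) (n : ℕ) :
    (PowerSeries.coeff (R := R) (n+1)) (f * (1 - PowerSeries.C (R := R) a * PowerSeries.X)) =
      PowerSeries.coeff (R := R) (n+1) f - PowerSeries.coeff (R := R) n f * a := by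
  have h : f * (1 - PowerSeries.C (R := R) a * PowerSeries.X) =
      f - (f * PowerSeries.C (R := R) a) * PowerSeries.X := by ring
  rw [h, map_sub, PowerSeries.coeff_succ_mul_X, PowerSeries.coeff_mul_C]

lemma one_sub_X_eq : (1 - PowerSeries.X : PowerSeries R) =
    1 - PowerSeries.C (R := R) 1 * PowerSeries.X := by simp

/-- `A * (1 - X) = 1 + X` where `A = ser 1`. -/
lemma ser_one_mul : ser (fun _ => (1:R)) * (1 - PowerSeries.X) = 1 + PowerSeries.X := by
  rw [one_sub_X_eq]
  refine PowerSeries.ext fun n => ?_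
  match n with
  | 0 => simp [coeff_mul_one_sub_zero, ser]
  | 1 =>
    rw [coeff_mul_one_sub_succ]
    simp [ser, PowerSeries.coeff_one, PowerSeries.coeff_X]
  | (n+2) =>
    rw [coeff_mul_one_sub_succ]
    simp [ser, PowerSeries.coeff_one, PowerSeries.coeff_X]

lemma N_mul_pow (d : ℕ) :
    N d * (1 - PowerSeries.X) ^ (d + 1) = (1 + PowerSeries.X) ^ d := by
  induction d with
  | zero =>
    rw [pow_one, pow_zero, one_sub_X_eq]
    refine PowerSeries.ext fun n => ?_
    match n with
    | 0 => simp [coeff_mul_one_sub_zero, N, cnt_zero]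
    | (n+1) =>
      rw [coeff_mul_one_sub_succ]
      simp [N, cnt_zero, PowerSeries.coeff_one]
  | succ d ih =>
    have hN : N (d+1) = ser (fun _ => (1:R)) * N d := by
      rw [← conv]
      exact congrArg PowerSeries.mk (funext fun r => by
        rw [Finset.sum_const, cnt, nsmul_eq_mul, mul_one])
    rw [hN, pow_succ']
    calc ser (fun _ => (1:R)) * N d * ((1 - PowerSeries.X) * (1 - PowerSeries.X) ^ (d+1))
        = (ser (fun _ => (1:R)) * (1 - PowerSeries.X)) *
            (N d * (1 - PowerSeries.X) ^ (d+1)) := by ring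
      _ = (1 + PowerSeries.X) * (1 + PowerSeries.X) ^ d := by rw [ser_one_mul, ih]
      _ = (1 + PowerSeries.X) ^ (d + 1) := by rw [pow_succ']

lemma coeff_mul_quad (f : PowerSeries R) (a b : R) (n : ℕ) :
    (PowerSeries.coeff (R := R) n)
        (f * ((1 - PowerSeries.C (R := R) a * PowerSeries.X) * (1 - PowerSeries.C (R := R) b * PowerSeries.X)))
      = (PowerSeries.coeff (R := R) n) f
        - (if 1 ≤ n then (PowerSeries.coeff (R := R) (n-1)) f * (a + b) else 0)
        + (if 2 ≤ n then (PowerSeries.coeff (R := R) (n-2)) f * (a * b) else 0) := by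
  have key : f * ((1 - PowerSeries.C (R := R) a * PowerSeries.X) * (1 - PowerSeries.C (R := R) b * PowerSeries.X))
      = f - (f * PowerSeries.C (R := R) (a+b)) * PowerSeries.X
          + (f * PowerSeries.C (R := R) (a*b)) * PowerSeries.X ^ 2 := by
    rw [map_add, map_mul]
    ring
  rw [key, map_add, map_sub]
  match n with
  | 0 =>
    rw [if_neg (by omega), if_neg (by omega)]
    have hX : (PowerSeries.coeff (R := R) 0) ((f * PowerSeries.C (R := R) (a+b)) * PowerSeries.X) = 0 := by
      rw [PowerSeries.coeff_zero_eq_constantCoeff, map_mul, PowerSeries.constantCoeff_X, mul_zero]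
    have hX2 : (PowerSeries.coeff (R := R) 0) ((f * PowerSeries.C (R := R) (a*b)) * PowerSeries.X ^ 2) = 0 := by
      rw [PowerSeries.coeff_zero_eq_constantCoeff, map_mul, map_pow,
        PowerSeries.constantCoeff_X]
      ring
    rw [hX, hX2]
  | 1 =>
    rw [PowerSeries.coeff_succ_mul_X, PowerSeries.coeff_mul_C, if_pos (le_refl 1),
      if_neg (by omega)]
    have hX2 : (PowerSeries.coeff (R := R) 1) ((f * PowerSeries.C (R := R) (a*b)) * PowerSeries.X ^ 2) = 0 := by
      rw [PowerSeries.coeff_mul_X_pow']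
      simp
    rw [hX2]
  | (n+2) =>
    rw [PowerSeries.coeff_succ_mul_X, PowerSeries.coeff_mul_C]
    have hX2 : (PowerSeries.coeff (R := R) (n+2)) ((f * PowerSeries.C (R := R) (a*b)) * PowerSeries.X ^ 2)
        = (PowerSeries.coeff (R := R) n) f * (a*b) := by
      rw [PowerSeries.coeff_mul_X_pow, PowerSeries.coeff_mul_C]
    rw [hX2, if_pos (by omega : (1:ℕ) ≤ n+2), if_pos (by omega : (2:ℕ) ≤ n+2),
      show n+2-1 = n+1 from rfl, show n+2-2 = n from rfl]

lemma T_mul_T (a b : ℤ) : (LaurentPolynomial.T a : R) * LaurentPolynomial.T b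
    = LaurentPolynomial.T (a + b) := (LaurentPolynomial.T_add a b).symm

lemma key_ident (m : ℤ) :
    (LaurentPolynomial.T (m+1) + LaurentPolynomial.T (-(m+1)) : R)
      - (LaurentPolynomial.T m + LaurentPolynomial.T (-m))
          * (LaurentPolynomial.T 1 + LaurentPolynomial.T (-1))
      + (LaurentPolynomial.T (m-1) + LaurentPolynomial.T (-(m-1))) = 0 := by
  have e1 : (LaurentPolynomial.T m : R) * LaurentPolynomial.T 1
      = LaurentPolynomial.T (m+1) := T_mul_T m 1
  have e2 : (LaurentPolynomial.T m : R) * LaurentPolynomial.T (-1)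
      = LaurentPolynomial.T (m-1) := by rw [T_mul_T, show m + -1 = m - 1 by ring]
  have e3 : (LaurentPolynomial.T (-m) : R) * LaurentPolynomial.T 1
      = LaurentPolynomial.T (-(m-1)) := by rw [T_mul_T, show -m + 1 = -(m-1) by ring]
  have e4 : (LaurentPolynomial.T (-m) : R) * LaurentPolynomial.T (-1)
      = LaurentPolynomial.T (-(m+1)) := by rw [T_mul_T, show -m + -1 = -(m+1) by ring]
  linear_combination - e1 - e2 - e3 - e4

/-- `ser T * (1 - T 1 X)(1 - T (-1) X) = 1 - X²`. -/
lemma serT_mul :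
    ser (fun k => (LaurentPolynomial.T k : R)) *
      ((1 - PowerSeries.C (R := R) (LaurentPolynomial.T 1) * PowerSeries.X) *
       (1 - PowerSeries.C (R := R) (LaurentPolynomial.T (-1)) * PowerSeries.X)) =
    (1 + PowerSeries.X) * (1 - PowerSeries.X) := by
  have hrhs : ((1:PowerSeries R) + PowerSeries.X) * (1 - PowerSeries.X)
      = 1 - PowerSeries.X ^ 2 := by ring
  rw [hrhs]
  refine PowerSeries.ext fun n => ?_
  rw [coeff_mul_quad, map_sub, PowerSeries.coeff_one, PowerSeries.coeff_X_pow]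
  simp only [ser, PowerSeries.coeff_mk]
  have hTT : (LaurentPolynomial.T 1 : R) * LaurentPolynomial.T (-1) = 1 := by
    rw [T_mul_T]; norm_num [LaurentPolynomial.T_zero]
  match n with
  | 0 =>
    rw [if_pos rfl, if_neg (by omega : ¬ (1:ℕ) ≤ 0), if_neg (by omega : ¬ (2:ℕ) ≤ 0),
      if_pos rfl, if_neg (by omega : ¬ (0:ℕ) = 2), LaurentPolynomial.T_zero]
    ring
  | 1 =>
    rw [if_neg (by omega : ¬ (1:ℕ) = 0), if_pos (le_refl 1), if_pos (rfl : 1 - 1 = 0),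
      if_neg (by omega : ¬ (2:ℕ) ≤ 1), if_neg (by omega : ¬ (1:ℕ) = 0),
      if_neg (by omega : ¬ (1:ℕ) = 2), LaurentPolynomial.T_zero, Nat.cast_one]
    ring
  | 2 =>
    rw [if_neg (by omega : ¬ (2:ℕ) = 0), if_pos (by omega : (1:ℕ) ≤ 2),
      if_neg (by omega : ¬ (2:ℕ) - 1 = 0), if_pos (le_refl 2), if_pos (rfl : 2 - 2 = 0),
      if_neg (by omega : ¬ (2:ℕ) = 0), if_pos (rfl : (2:ℕ) = 2), LaurentPolynomial.T_zero,
      show (2:ℕ) - 1 = 1 from rfl, Nat.cast_one, Nat.cast_ofNat]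
    have a1 : (LaurentPolynomial.T 1 : R) * LaurentPolynomial.T 1 = LaurentPolynomial.T 2 := by
      rw [T_mul_T, show (1:ℤ)+1 = 2 by norm_num]
    have a2 : (LaurentPolynomial.T (-1) : R) * LaurentPolynomial.T (-1)
        = LaurentPolynomial.T (-2) := by
      rw [T_mul_T, show (-1:ℤ)+(-1) = -2 by norm_num]
    linear_combination -a1 - a2 - hTT
  | (n+3) =>
    rw [if_neg (by omega : ¬ n+3 = 0), if_pos (by omega : 1 ≤ n+3),
      if_neg (by omega : ¬ n+3-1 = 0), if_pos (by omega : 2 ≤ n+3),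
      if_neg (by omega : ¬ n+3-2 = 0), if_neg (by omega : ¬ n+3 = 0),
      if_neg (by omega : ¬ n+3 = 2)]
    have c1 : ((n+3 : ℕ) : ℤ) = ((n:ℤ)+2) + 1 := by push_cast; ring
    have c2 : ((n+3-1 : ℕ) : ℤ) = ((n:ℤ)+2) := by
      rw [show n+3-1 = n+2 from rfl]; push_cast; ring
    have c3 : ((n+3-2 : ℕ) : ℤ) = ((n:ℤ)+2) - 1 := by
      rw [show n+3-2 = n+1 from rfl]; push_cast; ring
    rw [c1, c2, c3]
    have h := key_ident ((n:ℤ)+2)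
    linear_combination h + (LaurentPolynomial.T ((n:ℤ)+2-1)
      + LaurentPolynomial.T (-((n:ℤ)+2-1))) * hTT

end RefinedEhrhartAux

/-- The refined Ehrhart series of the `d`-dimensional cross-polytope for the weight vector
`(0,…,0,1)`: the coefficient of `t^r` is `∑_{v ∈ ℤ^d, |v₁|+⋯+|v_d| ≤ r} q^{v_d}`. -/
noncomputable def refinedEhrhartCrossLast (d : ℕ) (hd : 1 ≤ d) :
    PowerSeries (LaurentPolynomial ℤ) :=
  PowerSeries.mk fun r : ℕ =>
    ∑ v ∈ (Fintype.piFinset fun _ : Fin d => Finset.Icc (-(r : ℤ)) (r : ℤ)).filter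
        (fun v => ∑ i, |v i| ≤ (r : ℤ)),
      LaurentPolynomial.T (v ⟨d - 1, by omega⟩)

/-- For every `d ≥ 1`, the refined Ehrhart series of the `d`-dimensional cross-polytope for
the weight vector `(0,…,0,1)` satisfies
`E^{(0,…,0,1)}_{Ξ_d}(t,q) · (1−qt)(1−q⁻¹t)(1−t)^{d−1} = (1+t)^d`. -/
theorem refinedEhrhart_cross_last (d : ℕ) (hd : 1 ≤ d) :
    refinedEhrhartCrossLast d hd *
      ((1 - PowerSeries.C (R := LaurentPolynomial ℤ) (LaurentPolynomial.T 1) * PowerSeries.X) *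
       (1 - PowerSeries.C (R := LaurentPolynomial ℤ) (LaurentPolynomial.T (-1)) * PowerSeries.X) *
       (1 - PowerSeries.X) ^ (d - 1)) =
    (1 + PowerSeries.X) ^ d := by
  open RefinedEhrhartAux in
  obtain ⟨e, rfl⟩ : ∃ e, d = e + 1 := ⟨d - 1, by omega⟩
  have hdef : refinedEhrhartCrossLast (e+1) hd =
      ser (fun k => (LaurentPolynomial.T k : RefinedEhrhartAux.R)) * N e := by
    rw [← conv]
    rfl
  have hsplit : refinedEhrhartCrossLast (e+1) hd *
      ((1 - PowerSeries.C (R := LaurentPolynomial ℤ) (LaurentPolynomial.T 1) * PowerSeries.X) *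
       (1 - PowerSeries.C (R := LaurentPolynomial ℤ) (LaurentPolynomial.T (-1)) * PowerSeries.X) *
       (1 - PowerSeries.X) ^ (e+1-1)) =
      (ser (fun k => (LaurentPolynomial.T k : RefinedEhrhartAux.R)) *
        ((1 - PowerSeries.C (R := LaurentPolynomial ℤ) (LaurentPolynomial.T 1) * PowerSeries.X) *
         (1 - PowerSeries.C (R := LaurentPolynomial ℤ) (LaurentPolynomial.T (-1)) * PowerSeries.X)))
        * (N e * (1 - PowerSeries.X) ^ e) := by
    rw [hdef]
    have : e + 1 - 1 = e := by omega
    rw [this]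
    ring
  rw [hsplit, serT_mul]
  have hre : ((1 + PowerSeries.X) * (1 - PowerSeries.X)) *
      (N e * (1 - PowerSeries.X) ^ e)
      = (1 + PowerSeries.X) * (N e * (1 - PowerSeries.X) ^ (e+1)) := by ring
  rw [hre, N_mul_pow, ← pow_succ']
end

section
/- For all integers a and b, the refined Ehrhart series of the unit square satisfies, in the power series ring (ℤ[q,q⁻¹])[[t]]: E^{(a,b)}_{C_2}(t,q) · (1−t)(1−q^a t)(1−q^b t)(1−q^{a+b} t) = 1 − q^{a+b} t². -/
open PowerSeries LaurentPolynomial Finset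

private noncomputable abbrev LL := LaurentPolynomial ℤ

private lemma coeff_term' (G : PowerSeries LL) (c : LL) (k n : ℕ) :
    PowerSeries.coeff (R := LL) n (G * (PowerSeries.C (R := LL) c * PowerSeries.X ^ k)) =
      if k ≤ n then c * PowerSeries.coeff (R := LL) (n - k) G else 0 := by
  rw [mul_left_comm, PowerSeries.coeff_C_mul, PowerSeries.coeff_mul_X_pow']
  split <;> simp

private lemma expand_poly (α β : LL) :
    (1 - PowerSeries.X) * (1 - PowerSeries.C (R := LL) α * PowerSeries.X) *
      (1 - PowerSeries.C (R := LL) β * PowerSeries.X) *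
      (1 - PowerSeries.C (R := LL) (α * β) * PowerSeries.X) =
    1 - PowerSeries.C (R := LL) ((1 + α) * (1 + β)) * PowerSeries.X
      + PowerSeries.C (R := LL) (α + β + α * β + α * β + α ^ 2 * β + α * β ^ 2) * PowerSeries.X ^ 2
      - PowerSeries.C (R := LL) (α * β * (1 + α) * (1 + β)) * PowerSeries.X ^ 3
      + PowerSeries.C (R := LL) (α ^ 2 * β ^ 2) * PowerSeries.X ^ 4 := by
  simp only [map_add, map_mul, map_one, map_pow]
  ring

private lemma e_eq (a b : ℤ) (r : ℕ) :
    (∑ i ∈ Finset.range (r + 1), ∑ j ∈ Finset.range (r + 1),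
      LaurentPolynomial.T ((i : ℤ) * a + (j : ℤ) * b))
    = (∑ i ∈ Finset.range (r + 1), (T a : LL) ^ i) *
      (∑ j ∈ Finset.range (r + 1), (T b : LL) ^ j) := by
  rw [Finset.sum_mul_sum]
  refine Finset.sum_congr rfl fun i _ => Finset.sum_congr rfl fun j _ => ?_
  rw [T_add, T_pow, T_pow]


private lemma coeff_big (G : PowerSeries LL) (c1 c2 c3 c4 : LL) (n : ℕ) :
    PowerSeries.coeff (R := LL) n (G * (1 - PowerSeries.C (R := LL) c1 * PowerSeries.X
        + PowerSeries.C (R := LL) c2 * PowerSeries.X ^ 2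
        - PowerSeries.C (R := LL) c3 * PowerSeries.X ^ 3
        + PowerSeries.C (R := LL) c4 * PowerSeries.X ^ 4)) =
      PowerSeries.coeff (R := LL) n G
      - (if 1 ≤ n then c1 * PowerSeries.coeff (R := LL) (n - 1) G else 0)
      + (if 2 ≤ n then c2 * PowerSeries.coeff (R := LL) (n - 2) G else 0)
      - (if 3 ≤ n then c3 * PowerSeries.coeff (R := LL) (n - 3) G else 0)
      + (if 4 ≤ n then c4 * PowerSeries.coeff (R := LL) (n - 4) G else 0) := by
  rw [show PowerSeries.C (R := LL) c1 * PowerSeries.X = PowerSeries.C (R := LL) c1 * PowerSeries.X ^ 1 by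
    rw [pow_one]]
  rw [mul_add, mul_sub, mul_add, mul_sub, mul_one]
  rw [map_add, map_sub, map_add, map_sub, coeff_term', coeff_term', coeff_term', coeff_term']



/-- The refined Ehrhart series of the unit square with respect to integer weights `(a,b)`:
the coefficient of `t^r` is `∑_{0 ≤ i,j ≤ r} q^{ia+jb}`, a Laurent polynomial in `q`. -/
noncomputable def refinedEhrhartSquare (a b : ℤ) : PowerSeries (LaurentPolynomial ℤ) :=
  PowerSeries.mk fun r : ℕ =>
    ∑ i ∈ Finset.range (r + 1), ∑ j ∈ Finset.range (r + 1),
      LaurentPolynomial.T ((i : ℤ) * a + (j : ℤ) * b)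

/-- For all integers `a, b`, the refined Ehrhart series of the unit square satisfies
`E^{(a,b)}_{C_2}(t,q) · (1−t)(1−q^a t)(1−q^b t)(1−q^{a+b} t) = 1 − q^{a+b} t²`. -/
theorem refinedEhrhart_square (a b : ℤ) :
    refinedEhrhartSquare a b *
      ((1 - PowerSeries.X) *
       (1 - PowerSeries.C (R := LaurentPolynomial ℤ) (LaurentPolynomial.T a) * PowerSeries.X) *
       (1 - PowerSeries.C (R := LaurentPolynomial ℤ) (LaurentPolynomial.T b) * PowerSeries.X) *
       (1 - PowerSeries.C (R := LaurentPolynomial ℤ) (LaurentPolynomial.T (a + b)) *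
         PowerSeries.X)) =
    1 - PowerSeries.C (R := LaurentPolynomial ℤ) (LaurentPolynomial.T (a + b)) *
      PowerSeries.X ^ 2 := by
  set α : LL := T a with hα
  set β : LL := T b with hβ
  rw [show LaurentPolynomial.T (a + b) = α * β from T_add a b, expand_poly]
  refine PowerSeries.ext fun n => ?_
  rw [coeff_big]
  simp only [refinedEhrhartSquare, PowerSeries.coeff_mk, e_eq, ← hα, ← hβ]
  rw [map_sub, PowerSeries.coeff_one, PowerSeries.coeff_C_mul, PowerSeries.coeff_X_pow]
  match n with
  | 0 => norm_num
  | 1 =>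
    norm_num [Finset.sum_range_succ]
    try ring
  | 2 =>
    norm_num [Finset.sum_range_succ]
    try ring
  | 3 =>
    norm_num [Finset.sum_range_succ]
    try ring
  | (m + 4) =>
    rw [if_pos (by omega : (1:ℕ) ≤ m + 4), if_pos (by omega : (2:ℕ) ≤ m + 4),
      if_pos (by omega : (3:ℕ) ≤ m + 4), if_pos (by omega : (4:ℕ) ≤ m + 4),
      if_neg (by omega : ¬ m + 4 = 0), if_neg (by omega : ¬ m + 4 = 2)]
    rw [show m + 4 - 1 = m + 3 by omega, show m + 4 - 2 = m + 2 by omega,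
      show m + 4 - 3 = m + 1 by omega, show m + 4 - 4 = m by omega]
    simp only [geom_sum_succ]
    ring
end

section
/- For all integers a and b, the following identity holds in the power series ring (ℤ[q,q⁻¹])[[t]]: (∑_{r≥0} [r+1]_{q^a} [r+1]_{q^b} t^r) · (1−t)(1−q^a t)(1−q^b t)(1−q^{a+b} t) = 1 − q^{a+b} t². -/
set_option maxRecDepth 4000

/-- The `q`-integer `[k]_{q^a} = ∑_{i=0}^{k−1} q^{ia}` as a Laurent polynomial in `q`. -/
noncomputable def qInt (a : ℤ) (k : ℕ) : LaurentPolynomial ℤ :=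
  ∑ i ∈ Finset.range k, LaurentPolynomial.T ((i : ℤ) * a)

open LaurentPolynomial PowerSeries

lemma qInt_rec (a : ℤ) (k : ℕ) :
    qInt a (k + 2) = (1 + T a) * qInt a (k + 1) - T a * qInt a k := by
  have h1 : qInt a (k + 1) = qInt a k + T ((k : ℤ) * a) := by
    simp [qInt, Finset.sum_range_succ]
  have h2 : qInt a (k + 2) = qInt a (k + 1) + T (((k : ℤ) + 1) * a) := by
    simp [qInt, Finset.sum_range_succ]
  rw [h2, h1, add_mul, one_mul, T_add]
  ring

lemma qInt_one (a : ℤ) : qInt a 1 = 1 := by simp [qInt]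
lemma qInt_two (a : ℤ) : qInt a 2 = 1 + T a := by
  simp [qInt, Finset.sum_range_succ]
lemma qInt_three (a : ℤ) : qInt a 3 = 1 + T a + T a * T a := by
  simp [qInt, Finset.sum_range_succ, two_mul, T_add]

lemma qInt_four (a : ℤ) : qInt a 4 = 1 + T a + T a * T a + T a * (T a * T a) := by
  have := qInt_rec a 2
  rw [show (4:ℕ) = 2 + 2 from rfl, this, qInt_two, qInt_three]
  ring

/-- For all integers `a, b`:
`(∑_{r≥0} [r+1]_{q^a} [r+1]_{q^b} t^r) · (1−t)(1−q^a t)(1−q^b t)(1−q^{a+b} t) = 1 − q^{a+b} t²`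
as formal power series in `t` with coefficients in `ℤ[q,q⁻¹]`. -/
theorem qInt_product_series (a b : ℤ) :
    (PowerSeries.mk fun r : ℕ => qInt a (r + 1) * qInt b (r + 1)) *
      ((1 - PowerSeries.X) *
       (1 - PowerSeries.C (R := LaurentPolynomial ℤ) (LaurentPolynomial.T a) * PowerSeries.X) *
       (1 - PowerSeries.C (R := LaurentPolynomial ℤ) (LaurentPolynomial.T b) * PowerSeries.X) *
       (1 - PowerSeries.C (R := LaurentPolynomial ℤ) (LaurentPolynomial.T (a + b)) *
         PowerSeries.X)) =
    1 - PowerSeries.C (R := LaurentPolynomial ℤ) (LaurentPolynomial.T (a + b)) *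
      PowerSeries.X ^ 2 := by
  set A := (T a : LaurentPolynomial ℤ) with hA
  set B := (T b : LaurentPolynomial ℤ) with hB
  have hab : T (a + b) = A * B := T_add a b
  set g : (LaurentPolynomial ℤ)⟦X⟧ := PowerSeries.mk fun r : ℕ => qInt a (r + 1) * qInt b (r + 1) with hg
  set CC := PowerSeries.C (R := LaurentPolynomial ℤ) with hCC
  have hexp : (1 - PowerSeries.X) * (1 - CC A * PowerSeries.X) * (1 - CC B * PowerSeries.X) *
      (1 - CC (T (a+b)) * PowerSeries.X) =
      1 - CC (1 + A + B + A*B) * PowerSeries.X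
        + CC (A + B + 2*(A*B) + A*A*B + A*B*B) * PowerSeries.X ^ 2
        - CC (A*B + A*A*B + A*B*B + A*A*B*B) * PowerSeries.X ^ 3
        + CC (A*A*B*B) * PowerSeries.X ^ 4 := by
    rw [hab]
    simp only [map_add, map_mul, map_one, map_ofNat]
    ring
  rw [hexp]
  apply PowerSeries.ext; intro n
  have hcoeff : ∀ (c : LaurentPolynomial ℤ) (k : ℕ),
      (PowerSeries.coeff n) (g * (CC c * PowerSeries.X ^ k)) =
        if k ≤ n then c * (qInt a (n - k + 1) * qInt b (n - k + 1)) else 0 := by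
    intro c k
    rw [show g * (CC c * PowerSeries.X ^ k) = CC c * g * PowerSeries.X ^ k by ring,
      PowerSeries.coeff_mul_X_pow', ]
    rw [hCC]
    split <;> simp [PowerSeries.coeff_C_mul, PowerSeries.coeff_mk, hg]
  rw [show g * (1 - CC (1 + A + B + A*B) * PowerSeries.X
        + CC (A + B + 2*(A*B) + A*A*B + A*B*B) * PowerSeries.X ^ 2
        - CC (A*B + A*A*B + A*B*B + A*A*B*B) * PowerSeries.X ^ 3
        + CC (A*A*B*B) * PowerSeries.X ^ 4) =
      g * (CC 1 * PowerSeries.X ^ 0) - g * (CC (1+A+B+A*B) * PowerSeries.X ^ 1)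
        + g * (CC (A + B + 2*(A*B) + A*A*B + A*B*B) * PowerSeries.X ^ 2)
        - g * (CC (A*B + A*A*B + A*B*B + A*A*B*B) * PowerSeries.X ^ 3)
        + g * (CC (A*A*B*B) * PowerSeries.X ^ 4) by push_cast [map_one]; ring]
  rw [map_add, map_sub, map_add, map_sub, hcoeff, hcoeff, hcoeff, hcoeff, hcoeff]
  rw [hab, show (1 : (LaurentPolynomial ℤ)⟦X⟧) - CC (A*B) * PowerSeries.X ^ 2 =
      1 - (CC (A*B) * PowerSeries.X ^ 2) from rfl]
  rw [map_sub, PowerSeries.coeff_one]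
  rw [show (PowerSeries.coeff n) (CC (A*B) * PowerSeries.X ^ 2) = if n = 2 then A*B else 0 by
    rw [hCC, PowerSeries.coeff_C_mul, PowerSeries.coeff_X_pow]
    by_cases h : n = 2 <;> simp [h]]
  match n with
  | 0 => norm_num [qInt_one]
  | 1 => norm_num [qInt_one, qInt_two]; ring
  | 2 => norm_num [qInt_one, qInt_two, qInt_three]; ring
  | 3 =>
    norm_num
    rw [qInt_one, qInt_one, qInt_two, qInt_two, qInt_three, qInt_three, qInt_four, qInt_four]
    ring
  | (m+4) =>
    have h4 : ¬ (m + 4 = 0) := by omega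
    have h2 : ¬ (m + 4 = 2) := by omega
    simp only [if_neg h4, if_neg h2, Nat.zero_le, Nat.sub_zero,
      show 1 ≤ m + 4 by omega, show 2 ≤ m + 4 by omega, show 3 ≤ m + 4 by omega,
      show 4 ≤ m + 4 by omega, if_true, one_mul,
      show m + 4 - 1 = m + 3 by omega, show m + 4 - 2 = m + 2 by omega,
      show m + 4 - 3 = m + 1 by omega, show m + 4 - 4 = m by omega]
    rw [show m + 4 + 1 = (m + 3) + 2 from rfl, qInt_rec a (m+3), qInt_rec b (m+3),
        show m + 3 + 1 = (m + 2) + 2 from rfl, qInt_rec a (m+2), qInt_rec b (m+2),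
        show m + 2 + 1 = m + 1 + 2 from rfl, qInt_rec a (m+1), qInt_rec b (m+1)]
    ring
end

section
/- For all integers a, b, c, the refined Ehrhart series of the unit 3-cube satisfies, in the power series ring (ℤ[q,q⁻¹])[[t]]: E^{(a,b,c)}_{C_3}(t,q) · (1−t)(1−q^a t)(1−q^b t)(1−q^c t)(1−q^{a+b} t)(1−q^{a+c} t)(1−q^{b+c} t)(1−q^{a+b+c} t) = N(t,q), where N(t,q) = 1 − (3q^{a+b+c} + q^{2a+b+c} + q^{a+2b+c} + q^{a+b+2c} + q^{a+b} + q^{a+c} + q^{b+c}) t² + 2(q^{a+b+c} + q^{2a+b+c} + q^{a+2b+c} + q^{a+b+2c} + q^{2a+2b+c} + q^{2a+b+2c} + q^{a+2b+2c} + q^{2(a+b+c)}) t³ − (q^{2a+2b+c} + q^{2a+b+2c} + q^{a+2b+2c} + 3q^{2(a+b+c)} + q^{3a+2b+2c} + q^{2a+3b+2c} + q^{2a+2b+3c}) t⁴ + q^{3(a+b+c)} t⁶. -/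
open PowerSeries LaurentPolynomial

section Aux

variable {R : Type*} [CommRing R]

/-- geometric series `∑ u^r t^r`. -/
noncomputable def geomPS (u : R) : PowerSeries R := PowerSeries.mk fun r => u ^ r

lemma geomPS_mul (u : R) : geomPS u * (1 - PowerSeries.C u * X) = 1 := by
  have h : geomPS u * (PowerSeries.C u * X) = geomPS u * PowerSeries.C u * X := by ring
  ext n
  rw [mul_sub, mul_one, map_sub, h]
  cases n with
  | zero => simp [geomPS]
  | succ n =>
      simp [PowerSeries.coeff_succ_mul_X, PowerSeries.coeff_mul_C, geomPS, pow_succ,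
        PowerSeries.coeff_one]

/-- The series whose `r`-th coefficient is `(∑_{i≤r} x^i)(∑_{j≤r} y^j)(∑_{k≤r} z^k)`. -/
noncomputable def serPS (x y z : R) : PowerSeries R :=
  PowerSeries.mk fun r =>
    (∑ i ∈ Finset.range (r + 1), x ^ i) * (∑ j ∈ Finset.range (r + 1), y ^ j) *
      (∑ k ∈ Finset.range (r + 1), z ^ k)

noncomputable def denomPS (x y z : R) : PowerSeries R :=
  (1 - X) * (1 - PowerSeries.C x * X) * (1 - PowerSeries.C y * X) *
    (1 - PowerSeries.C z * X) * (1 - PowerSeries.C (x * y) * X) *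
    (1 - PowerSeries.C (x * z) * X) * (1 - PowerSeries.C (y * z) * X) *
    (1 - PowerSeries.C (x * y * z) * X)

noncomputable def numerPS (x y z : R) : PowerSeries R :=
  1
  - PowerSeries.C (3 * (x * y * z) + x ^ 2 * y * z + x * y ^ 2 * z + x * y * z ^ 2
      + x * y + x * z + y * z) * X ^ 2
  + PowerSeries.C (2 * (x * y * z + x ^ 2 * y * z + x * y ^ 2 * z + x * y * z ^ 2
      + x ^ 2 * y ^ 2 * z + x ^ 2 * y * z ^ 2 + x * y ^ 2 * z ^ 2
      + (x * y * z) ^ 2)) * X ^ 3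
  - PowerSeries.C (x ^ 2 * y ^ 2 * z + x ^ 2 * y * z ^ 2 + x * y ^ 2 * z ^ 2
      + 3 * (x * y * z) ^ 2 + x ^ 3 * y ^ 2 * z ^ 2 + x ^ 2 * y ^ 3 * z ^ 2
      + x ^ 2 * y ^ 2 * z ^ 3) * X ^ 4
  + PowerSeries.C ((x * y * z) ^ 3) * X ^ 6

lemma key1 (x y z : R) :
    serPS x y z * PowerSeries.C ((1 - x) * (1 - y) * (1 - z)) =
      geomPS (1 : R) - PowerSeries.C x * geomPS x - PowerSeries.C y * geomPS y
        - PowerSeries.C z * geomPS z + PowerSeries.C (x * y) * geomPS (x * y)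
        + PowerSeries.C (x * z) * geomPS (x * z) + PowerSeries.C (y * z) * geomPS (y * z)
        - PowerSeries.C (x * y * z) * geomPS (x * y * z) := by
  ext n
  have hx : (∑ i ∈ Finset.range (n + 1), x ^ i) * (1 - x) = 1 - x ^ (n + 1) := by
    linear_combination -geom_sum_mul x (n + 1)
  have hy : (∑ j ∈ Finset.range (n + 1), y ^ j) * (1 - y) = 1 - y ^ (n + 1) := by
    linear_combination -geom_sum_mul y (n + 1)
  have hz : (∑ k ∈ Finset.range (n + 1), z ^ k) * (1 - z) = 1 - z ^ (n + 1) := by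
    linear_combination -geom_sum_mul z (n + 1)
  simp only [PowerSeries.coeff_mul_C, map_sub, map_add, PowerSeries.coeff_C_mul,
    serPS, geomPS, PowerSeries.coeff_mk, one_pow]
  linear_combination
    ((∑ j ∈ Finset.range (n + 1), y ^ j) * (∑ k ∈ Finset.range (n + 1), z ^ k)
      * (1 - y) * (1 - z)) * hx
    + ((1 - x ^ (n + 1)) * (∑ k ∈ Finset.range (n + 1), z ^ k) * (1 - z)) * hy
    + ((1 - x ^ (n + 1)) * (1 - y ^ (n + 1))) * hz

end Aux

section Dom

variable {R : Type*} [CommRing R] [IsDomain R]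

lemma main_domain (x y z : R) (h : (1 - x) * (1 - y) * (1 - z) ≠ 0) :
    serPS x y z * denomPS x y z = numerPS x y z := by
  have hC : PowerSeries.C ((1 - x) * (1 - y) * (1 - z)) ≠ 0 := fun hh =>
    h (by simpa using congrArg (PowerSeries.coeff 0) hh)
  refine mul_right_cancel₀ hC ?_
  rw [mul_right_comm, key1]
  have h0 := geomPS_mul (1 : R)
  rw [map_one, one_mul] at h0
  have h1 := geomPS_mul x
  have h2 := geomPS_mul y
  have h3 := geomPS_mul z
  have h4 := geomPS_mul (x * y); rw [map_mul] at h4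
  have h5 := geomPS_mul (x * z); rw [map_mul] at h5
  have h6 := geomPS_mul (y * z); rw [map_mul] at h6
  have h7 := geomPS_mul (x * y * z); rw [map_mul, map_mul] at h7
  simp only [denomPS, numerPS]
  simp only [map_add, map_mul, map_sub, map_one, map_pow, map_ofNat]
  linear_combination (1) * ((1 - PowerSeries.C x * X) * (1 - PowerSeries.C y * X) * (1 - PowerSeries.C z * X) * (1 - PowerSeries.C x * PowerSeries.C y * X) * (1 - PowerSeries.C x * PowerSeries.C z * X) * (1 - PowerSeries.C y * PowerSeries.C z * X) * (1 - PowerSeries.C x * PowerSeries.C y * PowerSeries.C z * X)) * h0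
      - (PowerSeries.C x) * ((1 - X) * (1 - PowerSeries.C y * X) * (1 - PowerSeries.C z * X) * (1 - PowerSeries.C x * PowerSeries.C y * X) * (1 - PowerSeries.C x * PowerSeries.C z * X) * (1 - PowerSeries.C y * PowerSeries.C z * X) * (1 - PowerSeries.C x * PowerSeries.C y * PowerSeries.C z * X)) * h1
      - (PowerSeries.C y) * ((1 - X) * (1 - PowerSeries.C x * X) * (1 - PowerSeries.C z * X) * (1 - PowerSeries.C x * PowerSeries.C y * X) * (1 - PowerSeries.C x * PowerSeries.C z * X) * (1 - PowerSeries.C y * PowerSeries.C z * X) * (1 - PowerSeries.C x * PowerSeries.C y * PowerSeries.C z * X)) * h2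
      - (PowerSeries.C z) * ((1 - X) * (1 - PowerSeries.C x * X) * (1 - PowerSeries.C y * X) * (1 - PowerSeries.C x * PowerSeries.C y * X) * (1 - PowerSeries.C x * PowerSeries.C z * X) * (1 - PowerSeries.C y * PowerSeries.C z * X) * (1 - PowerSeries.C x * PowerSeries.C y * PowerSeries.C z * X)) * h3
      + (PowerSeries.C x * PowerSeries.C y) * ((1 - X) * (1 - PowerSeries.C x * X) * (1 - PowerSeries.C y * X) * (1 - PowerSeries.C z * X) * (1 - PowerSeries.C x * PowerSeries.C z * X) * (1 - PowerSeries.C y * PowerSeries.C z * X) * (1 - PowerSeries.C x * PowerSeries.C y * PowerSeries.C z * X)) * h4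
      + (PowerSeries.C x * PowerSeries.C z) * ((1 - X) * (1 - PowerSeries.C x * X) * (1 - PowerSeries.C y * X) * (1 - PowerSeries.C z * X) * (1 - PowerSeries.C x * PowerSeries.C y * X) * (1 - PowerSeries.C y * PowerSeries.C z * X) * (1 - PowerSeries.C x * PowerSeries.C y * PowerSeries.C z * X)) * h5
      + (PowerSeries.C y * PowerSeries.C z) * ((1 - X) * (1 - PowerSeries.C x * X) * (1 - PowerSeries.C y * X) * (1 - PowerSeries.C z * X) * (1 - PowerSeries.C x * PowerSeries.C y * X) * (1 - PowerSeries.C x * PowerSeries.C z * X) * (1 - PowerSeries.C x * PowerSeries.C y * PowerSeries.C z * X)) * h6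
      - (PowerSeries.C x * PowerSeries.C y * PowerSeries.C z) * ((1 - X) * (1 - PowerSeries.C x * X) * (1 - PowerSeries.C y * X) * (1 - PowerSeries.C z * X) * (1 - PowerSeries.C x * PowerSeries.C y * X) * (1 - PowerSeries.C x * PowerSeries.C z * X) * (1 - PowerSeries.C y * PowerSeries.C z * X)) * h7

end Dom

section Transfer

lemma map_serPS {R S : Type*} [CommRing R] [CommRing S] (f : R →+* S) (x y z : R) :
    PowerSeries.map f (serPS x y z) = serPS (f x) (f y) (f z) := by
  ext n
  simp [serPS, PowerSeries.coeff_map, map_sum, map_mul, map_pow]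

lemma map_denomPS {R S : Type*} [CommRing R] [CommRing S] (f : R →+* S) (x y z : R) :
    PowerSeries.map f (denomPS x y z) = denomPS (f x) (f y) (f z) := by
  simp [denomPS, map_mul, map_sub, map_one, PowerSeries.map_C, PowerSeries.map_X]

lemma map_numerPS {R S : Type*} [CommRing R] [CommRing S] (f : R →+* S) (x y z : R) :
    PowerSeries.map f (numerPS x y z) = numerPS (f x) (f y) (f z) := by
  simp [numerPS, map_mul, map_sub, map_add, map_one, map_pow, map_ofNat,
    PowerSeries.map_C, PowerSeries.map_X]

lemma main {R : Type*} [CommRing R] (x y z : R) :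
    serPS x y z * denomPS x y z = numerPS x y z := by
  have hne : ((1 : MvPolynomial (Fin 3) ℤ) - MvPolynomial.X 0) * (1 - MvPolynomial.X 1) *
      (1 - MvPolynomial.X 2) ≠ 0 := by
    intro hh
    have := congrArg (MvPolynomial.eval fun _ => (0 : ℤ)) hh
    simp at this
  have h := main_domain (MvPolynomial.X 0) (MvPolynomial.X 1)
    (MvPolynomial.X 2 : MvPolynomial (Fin 3) ℤ) hne
  have h2 := congrArg (PowerSeries.map
    ((MvPolynomial.aeval ![x, y, z] : MvPolynomial (Fin 3) ℤ →ₐ[ℤ] R) : MvPolynomial (Fin 3) ℤ →+* R)) h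
  rw [map_mul, map_serPS, map_denomPS, map_numerPS] at h2
  simpa using h2

end Transfer

/-- The refined Ehrhart series of the unit 3-cube with respect to integer weights `(a,b,c)`:
the coefficient of `t^r` is `∑_{0 ≤ i,j,k ≤ r} q^{ia+jb+kc}`, a Laurent polynomial in `q`. -/
noncomputable def refinedEhrhartCube3 (a b c : ℤ) : PowerSeries (LaurentPolynomial ℤ) :=
  PowerSeries.mk fun r : ℕ =>
    ∑ i ∈ Finset.range (r + 1), ∑ j ∈ Finset.range (r + 1), ∑ k ∈ Finset.range (r + 1),
      T ((i : ℤ) * a + (j : ℤ) * b + (k : ℤ) * c)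

set_option maxRecDepth 10000 in
/-- For all integers `a, b, c`, the refined Ehrhart series of the unit 3-cube satisfies
`E^{(a,b,c)}_{C_3}(t,q) · (1−t)(1−qᵃt)(1−qᵇt)(1−qᶜt)(1−q^{a+b}t)(1−q^{a+c}t)(1−q^{b+c}t)(1−q^{a+b+c}t)
 = N(t,q)` with the explicit numerator `N` of Proposition 4. -/
theorem refinedEhrhart_cube3 (a b c : ℤ) :
    refinedEhrhartCube3 a b c *
      ((1 - X) * (1 - (PowerSeries.C : LaurentPolynomial ℤ →+* PowerSeries (LaurentPolynomial ℤ)) (T a) * X) *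
       (1 - (PowerSeries.C : LaurentPolynomial ℤ →+* PowerSeries (LaurentPolynomial ℤ)) (T b) * X) *
       (1 - (PowerSeries.C : LaurentPolynomial ℤ →+* PowerSeries (LaurentPolynomial ℤ)) (T c) * X) *
       (1 - (PowerSeries.C : LaurentPolynomial ℤ →+* PowerSeries (LaurentPolynomial ℤ)) (T (a + b)) * X) *
       (1 - (PowerSeries.C : LaurentPolynomial ℤ →+* PowerSeries (LaurentPolynomial ℤ)) (T (a + c)) * X) *
       (1 - (PowerSeries.C : LaurentPolynomial ℤ →+* PowerSeries (LaurentPolynomial ℤ)) (T (b + c)) * X) *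
       (1 - (PowerSeries.C : LaurentPolynomial ℤ →+* PowerSeries (LaurentPolynomial ℤ)) (T (a + b + c)) * X)) =
    1
    - (PowerSeries.C : LaurentPolynomial ℤ →+* PowerSeries (LaurentPolynomial ℤ))
        (3 * T (a + b + c) + T (2 * a + b + c) + T (a + 2 * b + c) + T (a + b + 2 * c)
          + T (a + b) + T (a + c) + T (b + c)) * X ^ 2
    + (PowerSeries.C : LaurentPolynomial ℤ →+* PowerSeries (LaurentPolynomial ℤ))
        (2 * (T (a + b + c) + T (2 * a + b + c) + T (a + 2 * b + c) + T (a + b + 2 * c)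
          + T (2 * a + 2 * b + c) + T (2 * a + b + 2 * c) + T (a + 2 * b + 2 * c)
          + T (2 * (a + b + c)))) * X ^ 3
    - (PowerSeries.C : LaurentPolynomial ℤ →+* PowerSeries (LaurentPolynomial ℤ))
        (T (2 * a + 2 * b + c) + T (2 * a + b + 2 * c) + T (a + 2 * b + 2 * c)
          + 3 * T (2 * (a + b + c)) + T (3 * a + 2 * b + 2 * c) + T (2 * a + 3 * b + 2 * c)
          + T (2 * a + 2 * b + 3 * c)) * X ^ 4
    + (PowerSeries.C : LaurentPolynomial ℤ →+* PowerSeries (LaurentPolynomial ℤ)) (T (3 * (a + b + c))) * X ^ 6 := by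
  have t2 : ∀ m : ℤ, (T (2 * m) : LaurentPolynomial ℤ) = T m ^ 2 := fun m => by
    rw [two_mul, T_add, sq]
  have t3 : ∀ m : ℤ, (T (3 * m) : LaurentPolynomial ℤ) = T m ^ 3 := fun m => by
    rw [show (3 : ℤ) * m = m + m + m by ring, T_add, T_add]; ring
  have e1 : refinedEhrhartCube3 a b c = serPS (T a) (T b) (T c) := by
    unfold refinedEhrhartCube3 serPS
    refine PowerSeries.ext fun r => ?_
    rw [PowerSeries.coeff_mk, PowerSeries.coeff_mk]
    rw [Finset.sum_mul_sum, Finset.sum_mul_sum]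
    refine Finset.sum_congr rfl fun i _ => ?_
    rw [Finset.sum_comm]
    refine Finset.sum_congr rfl fun k _ => ?_
    rw [Finset.sum_mul]
    refine Finset.sum_congr rfl fun j _ => ?_
    rw [T_pow, T_pow, T_pow, ← T_add, ← T_add]
  rw [e1]
  simp only [T_add, t2, t3]
  have h := main (T a : LaurentPolynomial ℤ) (T b) (T c)
  simp only [denomPS, numerPS] at h
  simp only [map_add, map_mul, map_pow, map_sub, map_one, map_ofNat] at h ⊢
  linear_combination h
end

section
/- The refined Ehrhart series of the unit 3-cube for the symmetric weight vector (1,1,1) satisfies, in the power series ring ℤ[q][[t]]: E^{(1,1,1)}_{C_3}(t,q) · (1−t)(1−qt)(1−q²t)(1−q³t) = 1 + 2q(1+q)t + q³t². -/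
/-- Geometric series identity: `(∑ c^r t^r) * (1 - c t) = 1` in `ℤ[q][[t]]`. -/
lemma geomG_aux (c : Polynomial ℤ) :
    (PowerSeries.mk fun r => c ^ r) * (1 - (PowerSeries.C : Polynomial ℤ →+* PowerSeries (Polynomial ℤ)) c * PowerSeries.X) = 1 := by
  ext n
  rw [mul_sub, mul_one]
  cases n with
  | zero => simp
  | succ n =>
    rw [map_sub, PowerSeries.coeff_mk]
    have : (PowerSeries.mk fun r => c ^ r) * ((PowerSeries.C : Polynomial ℤ →+* PowerSeries (Polynomial ℤ)) c * PowerSeries.X)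
        = (PowerSeries.C : Polynomial ℤ →+* PowerSeries (Polynomial ℤ)) c * (PowerSeries.X * PowerSeries.mk fun r => c ^ r) := by
      ring
    rw [this, PowerSeries.coeff_C_mul, PowerSeries.coeff_succ_X_mul, PowerSeries.coeff_mk]
    simp [pow_succ, mul_comm]

/-- The refined Ehrhart series of the unit 3-cube for the symmetric weight vector `(1,1,1)`:
the coefficient of `t^r` is `∑_{0 ≤ i,j,k ≤ r} q^{i+j+k} ∈ ℤ[q]`. -/
noncomputable def refinedEhrhartCube3Sym : PowerSeries (Polynomial ℤ) :=
  PowerSeries.mk fun r : ℕ =>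
    ∑ i ∈ Finset.range (r + 1), ∑ j ∈ Finset.range (r + 1), ∑ k ∈ Finset.range (r + 1),
      (Polynomial.X : Polynomial ℤ) ^ (i + j + k)

/-- Multiplying the refined Ehrhart series by `(1-q)^3` decomposes it into four
geometric series, since `∑_{0≤i,j,k≤r} q^{i+j+k} · (1-q)^3 = (1-q^{r+1})^3`. -/
lemma refinedEhrhartCube3Sym_mul_C :
    refinedEhrhartCube3Sym * (PowerSeries.C : Polynomial ℤ →+* PowerSeries (Polynomial ℤ)) ((1 - Polynomial.X) ^ 3) =
      (PowerSeries.mk fun r => (1 : Polynomial ℤ) ^ r)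
      - (PowerSeries.C : Polynomial ℤ →+* PowerSeries (Polynomial ℤ)) (3 * Polynomial.X) * (PowerSeries.mk fun r => (Polynomial.X : Polynomial ℤ) ^ r)
      + (PowerSeries.C : Polynomial ℤ →+* PowerSeries (Polynomial ℤ)) (3 * Polynomial.X ^ 2) * (PowerSeries.mk fun r => ((Polynomial.X : Polynomial ℤ) ^ 2) ^ r)
      - (PowerSeries.C : Polynomial ℤ →+* PowerSeries (Polynomial ℤ)) (Polynomial.X ^ 3) * (PowerSeries.mk fun r => ((Polynomial.X : Polynomial ℤ) ^ 3) ^ r) := by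
  refine PowerSeries.ext fun r => ?_
  rw [PowerSeries.coeff_mul_C]
  simp only [map_sub, map_add, PowerSeries.coeff_C_mul, PowerSeries.coeff_mk, refinedEhrhartCube3Sym]
  have hsum : (∑ i ∈ Finset.range (r + 1), ∑ j ∈ Finset.range (r + 1), ∑ k ∈ Finset.range (r + 1),
      (Polynomial.X : Polynomial ℤ) ^ (i + j + k))
      = (∑ i ∈ Finset.range (r + 1), (Polynomial.X : Polynomial ℤ) ^ i) ^ 3 := by
    simp only [pow_succ, pow_zero, one_mul, Finset.sum_mul, Finset.mul_sum, pow_add, mul_assoc]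
    exact Finset.sum_congr rfl fun i _ => Finset.sum_congr rfl fun j _ =>
      Finset.sum_congr rfl fun k _ => by ring
  have hgeom : (∑ i ∈ Finset.range (r + 1), (Polynomial.X : Polynomial ℤ) ^ i) * (1 - Polynomial.X)
      = 1 - Polynomial.X ^ (r + 1) := by
    have := geom_sum_mul (Polynomial.X : Polynomial ℤ) (r + 1)
    linear_combination -this
  rw [hsum]
  calc (∑ i ∈ Finset.range (r + 1), (Polynomial.X : Polynomial ℤ) ^ i) ^ 3 * (1 - Polynomial.X) ^ 3
      = ((∑ i ∈ Finset.range (r + 1), (Polynomial.X : Polynomial ℤ) ^ i) * (1 - Polynomial.X)) ^ 3 := by ring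
    _ = (1 - Polynomial.X ^ (r + 1)) ^ 3 := by rw [hgeom]
    _ = _ := by ring

/-- The refined Ehrhart series of the unit 3-cube for the weight vector `(1,1,1)` satisfies
`E^{(1,1,1)}_{C_3}(t,q) · (1−t)(1−qt)(1−q²t)(1−q³t) = 1 + 2q(1+q)t + q³t²` in `ℤ[q][[t]]`. -/
theorem refinedEhrhart_cube3_symmetric :
    refinedEhrhartCube3Sym *
      ((1 - PowerSeries.X) *
       (1 - (PowerSeries.C : Polynomial ℤ →+* PowerSeries (Polynomial ℤ)) Polynomial.X * PowerSeries.X) *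
       (1 - (PowerSeries.C : Polynomial ℤ →+* PowerSeries (Polynomial ℤ)) (Polynomial.X ^ 2) * PowerSeries.X) *
       (1 - (PowerSeries.C : Polynomial ℤ →+* PowerSeries (Polynomial ℤ)) (Polynomial.X ^ 3) * PowerSeries.X)) =
    1 + (PowerSeries.C : Polynomial ℤ →+* PowerSeries (Polynomial ℤ)) (2 * Polynomial.X * (1 + Polynomial.X)) * PowerSeries.X
      + (PowerSeries.C : Polynomial ℤ →+* PowerSeries (Polynomial ℤ)) (Polynomial.X ^ 3) * PowerSeries.X ^ 2 := by
  have h0 := geomG_aux 1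
  rw [map_one, one_mul] at h0
  have h1 := geomG_aux Polynomial.X
  have h2 := geomG_aux (Polynomial.X ^ 2)
  have h3 := geomG_aux (Polynomial.X ^ 3)
  have hne : (1 - Polynomial.X : Polynomial ℤ) ≠ 0 := by
    intro h
    have := congrArg (Polynomial.coeff · 1) h
    simp [Polynomial.coeff_one] at this
  have hC : (PowerSeries.C : Polynomial ℤ →+* PowerSeries (Polynomial ℤ)) ((1 - Polynomial.X) ^ 3) ≠ 0 := by
    intro h
    have h' := congrArg ((PowerSeries.constantCoeff (R := Polynomial ℤ))) h
    simp only [PowerSeries.constantCoeff_C, map_zero] at h'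
    exact pow_ne_zero 3 hne h'
  apply mul_right_cancel₀ hC
  have key : refinedEhrhartCube3Sym *
      ((1 - PowerSeries.X) *
       (1 - (PowerSeries.C : Polynomial ℤ →+* PowerSeries (Polynomial ℤ)) Polynomial.X * PowerSeries.X) *
       (1 - (PowerSeries.C : Polynomial ℤ →+* PowerSeries (Polynomial ℤ)) (Polynomial.X ^ 2) * PowerSeries.X) *
       (1 - (PowerSeries.C : Polynomial ℤ →+* PowerSeries (Polynomial ℤ)) (Polynomial.X ^ 3) * PowerSeries.X)) *
      (PowerSeries.C : Polynomial ℤ →+* PowerSeries (Polynomial ℤ)) ((1 - Polynomial.X) ^ 3)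
      = (refinedEhrhartCube3Sym * (PowerSeries.C : Polynomial ℤ →+* PowerSeries (Polynomial ℤ)) ((1 - Polynomial.X) ^ 3)) *
      ((1 - PowerSeries.X) *
       (1 - (PowerSeries.C : Polynomial ℤ →+* PowerSeries (Polynomial ℤ)) Polynomial.X * PowerSeries.X) *
       (1 - (PowerSeries.C : Polynomial ℤ →+* PowerSeries (Polynomial ℤ)) (Polynomial.X ^ 2) * PowerSeries.X) *
       (1 - (PowerSeries.C : Polynomial ℤ →+* PowerSeries (Polynomial ℤ)) (Polynomial.X ^ 3) * PowerSeries.X)) := by ring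
  rw [key, refinedEhrhartCube3Sym_mul_C]
  simp only [map_mul, map_pow, map_sub, map_add, map_one, map_ofNat] at *
  set cq := (PowerSeries.C : Polynomial ℤ →+* PowerSeries (Polynomial ℤ)) Polynomial.X with hcq
  linear_combination
    ((1 - cq * PowerSeries.X) * (1 - cq ^ 2 * PowerSeries.X) * (1 - cq ^ 3 * PowerSeries.X)) * h0
    - (3 * cq) * ((1 - PowerSeries.X) * (1 - cq ^ 2 * PowerSeries.X) * (1 - cq ^ 3 * PowerSeries.X)) * h1
    + (3 * cq ^ 2) * ((1 - PowerSeries.X) * (1 - cq * PowerSeries.X) * (1 - cq ^ 3 * PowerSeries.X)) * h2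
    - (cq ^ 3) * ((1 - PowerSeries.X) * (1 - cq * PowerSeries.X) * (1 - cq ^ 2 * PowerSeries.X)) * h3
end

section
/- (MacMahon–Carlitz formula) For every d ≥ 1, the following identity holds in the power series ring ℤ[q][[t]]: (∑_{r≥0} ([r+1]_q)^d t^r) · ∏_{j=0}^{d} (1 − q^j t) = ∑_{σ ∈ S_d} q^{maj(σ)} t^{desc(σ)}. -/
open scoped Classical in
/-- The descent set of a permutation `σ` of `{1,…,d}` (0-indexed): the set of `i : Fin d`
such that position `i+1` (1-based) is a descent, i.e. `σ(i) > σ(i+1)`. -/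
noncomputable def descentSet {d : ℕ} (σ : Equiv.Perm (Fin d)) : Finset (Fin d) :=
  Finset.univ.filter fun i => ∃ h : (i : ℕ) + 1 < d, σ ⟨(i : ℕ) + 1, h⟩ < σ i

/-- The number of descents of a permutation. -/
noncomputable def desc {d : ℕ} (σ : Equiv.Perm (Fin d)) : ℕ := (descentSet σ).card

/-- The major index of a permutation: the sum of its (1-based) descent positions. -/
noncomputable def maj {d : ℕ} (σ : Equiv.Perm (Fin d)) : ℕ :=
  ∑ i ∈ descentSet σ, ((i : ℕ) + 1)

noncomputable section
namespace MC1
open Polynomial PowerSeries Finset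
open scoped Classical

abbrev R := Polynomial ℤ

def geom (j : ℕ) : PowerSeries R := PowerSeries.mk fun m => (X : R) ^ (j * m)

lemma geom_inv (j : ℕ) :
    (1 - PowerSeries.C ((X : R) ^ j) * PowerSeries.X) * geom j = 1 := by
  ext n : 1
  rw [sub_mul, one_mul, map_sub, mul_assoc, PowerSeries.coeff_C_mul]
  cases n with
  | zero => simp [geom]
  | succ n =>
    rw [coeff_succ_X_mul]
    simp only [geom, coeff_mk, PowerSeries.coeff_one, Nat.succ_ne_zero, if_false]
    rw [← pow_add, Nat.mul_succ, sub_eq_zero]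
    ring_nf

def box (d m : ℕ) : Finset (Fin d → ℕ) :=
  (Fintype.piFinset fun _ => Finset.range (m + 1)).filter fun g => Antitone g

lemma mem_box {d m : ℕ} {g : Fin d → ℕ} :
    g ∈ box d m ↔ (∀ i, g i ≤ m) ∧ Antitone g := by
  simp [box, Fintype.mem_piFinset, Nat.lt_succ_iff]

lemma antitone_snoc {d : ℕ} {f : Fin d → ℕ} {x : ℕ} (hf : Antitone f)
    (hx : ∀ i, x ≤ f i) : Antitone (Fin.snoc f x) := by
  intro a b hab
  induction b using Fin.lastCases with
  | last =>
    rw [Fin.snoc_last]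
    induction a using Fin.lastCases with
    | last => rw [Fin.snoc_last]
    | cast a => rw [Fin.snoc_castSucc]; exact hx a
  | cast b =>
    induction a using Fin.lastCases with
    | last => exact absurd (lt_of_le_of_lt hab (Fin.castSucc_lt_last b)) (lt_irrefl _)
    | cast a =>
      rw [Fin.snoc_castSucc, Fin.snoc_castSucc]
      exact hf (Fin.castSucc_le_castSucc_iff.mp hab)

lemma coeff_Q (d m : ℕ) :
    PowerSeries.coeff m (∏ j ∈ Finset.range (d + 1), geom j) =
      ∑ g ∈ box d m, (X : R) ^ (∑ i, g i) := by
  induction d generalizing m with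
  | zero =>
    rw [Finset.range_one, Finset.prod_singleton]
    have hbox : box 0 m = {fun i => i.elim0} := by
      apply Finset.eq_singleton_iff_unique_mem.mpr
      constructor
      · rw [mem_box]; exact ⟨fun i => i.elim0, fun a => a.elim0⟩
      · intro g _; funext i; exact i.elim0
    simp [geom, hbox]
  | succ d IH =>
    rw [Finset.prod_range_succ, PowerSeries.coeff_mul]
    have : ∀ p ∈ Finset.HasAntidiagonal.antidiagonal m,
        PowerSeries.coeff p.1 (∏ j ∈ Finset.range (d + 1), geom j) *
          PowerSeries.coeff p.2 (geom (d + 1)) =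
        ∑ g ∈ box d p.1, (X : R) ^ (∑ i, g i + (d + 1) * p.2) := by
      intro p _
      rw [IH, geom, coeff_mk, Finset.sum_mul]
      exact Finset.sum_congr rfl fun g _ => by rw [pow_add]
    rw [Finset.sum_congr rfl this, Finset.sum_sigma']
    apply Finset.sum_nbij'
      (i := fun a => Fin.snoc (fun i => a.2 i + a.1.2) a.1.2)
      (j := fun g => ⟨(m - g (Fin.last d), g (Fin.last d)),
        fun i => g i.castSucc - g (Fin.last d)⟩)
    · rintro ⟨⟨p1, p2⟩, g'⟩ ha
      rw [Finset.mem_sigma] at ha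
      obtain ⟨hp, hg'⟩ := ha
      rw [Finset.HasAntidiagonal.mem_antidiagonal] at hp
      rw [mem_box] at hg' ⊢
      refine ⟨?_, antitone_snoc (fun a b hab => by
          simp only; exact Nat.add_le_add_right (hg'.2 hab) _)
          (fun i => Nat.le_add_left _ _)⟩
      intro i
      induction i using Fin.lastCases with
      | last => rw [Fin.snoc_last]; omega
      | cast i =>
        rw [Fin.snoc_castSucc]
        have := hg'.1 i
        omega
    · intro g hg
      rw [mem_box] at hg
      rw [Finset.mem_sigma, Finset.HasAntidiagonal.mem_antidiagonal, mem_box]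
      have hlast : g (Fin.last d) ≤ m := hg.1 _
      refine ⟨by dsimp only; omega, fun i => by
          dsimp only
          have := hg.1 i.castSucc; have := hg.2 (Fin.le_last i.castSucc); omega,
        fun a b hab => Nat.sub_le_sub_right (hg.2 (Fin.castSucc_le_castSucc_iff.mpr hab)) _⟩
    · rintro ⟨⟨p1, p2⟩, g'⟩ ha
      rw [Finset.mem_sigma] at ha
      obtain ⟨hp, hg'⟩ := ha
      rw [Finset.HasAntidiagonal.mem_antidiagonal] at hp
      dsimp only at hp hg' ⊢
      have h1 : (Fin.snoc (fun i => g' i + p2) p2 : Fin (d+1) → ℕ) (Fin.last d) = p2 :=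
        Fin.snoc_last _ _
      refine Sigma.ext ?_ ?_
      · simp only [h1]
        exact Prod.ext (by dsimp only; omega) rfl
      · simp only [h1]
        refine heq_of_eq (funext fun i => ?_)
        rw [Fin.snoc_castSucc]
        omega
    · intro g hg
      rw [mem_box] at hg
      funext i
      induction i using Fin.lastCases with
      | last => rw [Fin.snoc_last]
      | cast i =>
        rw [Fin.snoc_castSucc]
        dsimp only
        have := hg.2 (Fin.le_last i.castSucc)
        omega
    · rintro ⟨⟨p1, p2⟩, g'⟩ ha
      rw [Finset.mem_sigma] at ha
      obtain ⟨hp, hg'⟩ := ha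
      rw [Finset.HasAntidiagonal.mem_antidiagonal] at hp
      congr 1
      rw [Fin.sum_univ_castSucc]
      simp only [Fin.snoc_castSucc, Fin.snoc_last, Finset.sum_add_distrib,
        Finset.sum_const, Finset.card_univ, Fintype.card_fin, smul_eq_mul]
      ring


lemma PQ (d : ℕ) :
    (∏ j ∈ Finset.range (d + 1),
        (1 - PowerSeries.C ((X : R) ^ j) * PowerSeries.X)) *
      ∏ j ∈ Finset.range (d + 1), geom j = 1 := by
  rw [← Finset.prod_mul_distrib]
  rw [Finset.prod_congr rfl fun j _ => geom_inv j]
  exact Finset.prod_const_one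

variable {n : ℕ}


def DS (σ : Equiv.Perm (Fin (n + 1))) : Finset (Fin n) :=
  Finset.univ.filter fun i => σ i.succ < σ i.castSucc

lemma descentSet_eq (σ : Equiv.Perm (Fin (n + 1))) :
    descentSet σ = (DS σ).image Fin.castSucc := by
  ext j
  simp only [descentSet, DS, Finset.mem_filter, Finset.mem_univ, true_and,
    Finset.mem_image]
  constructor
  · rintro ⟨h, hlt⟩
    have hj : (j : ℕ) < n := by omega
    refine ⟨⟨j, hj⟩, ?_, ?_⟩
    · convert hlt using 2 <;> apply Fin.ext <;> simp [Fin.succ, Fin.castSucc, Fin.castAdd, Fin.castLE]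
    · apply Fin.ext; simp
  · rintro ⟨i, hi, rfl⟩
    refine ⟨by simp only [Fin.coe_castSucc]; omega, ?_⟩
    convert hi using 2 <;> apply Fin.ext <;> simp [Fin.succ, Fin.castSucc, Fin.castAdd, Fin.castLE]

lemma desc_eq (σ : Equiv.Perm (Fin (n + 1))) : desc σ = (DS σ).card := by
  rw [desc, descentSet_eq, Finset.card_image_of_injective _ (Fin.castSucc_injective _)]

lemma maj_eq (σ : Equiv.Perm (Fin (n + 1))) : maj σ = ∑ i ∈ DS σ, ((i : ℕ) + 1) := by
  rw [maj, descentSet_eq, Finset.sum_image]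
  · simp
  · intro a _ b _ h
    exact Fin.castSucc_injective _ h

/-- number of descents at 0-based position ≥ c -/
def D (σ : Equiv.Perm (Fin (n + 1))) (c : ℕ) : ℕ :=
  ((DS σ).filter fun j : Fin n => c ≤ (j : ℕ)).card

lemma D_zero (σ : Equiv.Perm (Fin (n + 1))) : D σ 0 = desc σ := by
  rw [D, desc_eq, Finset.filter_true_of_mem fun j _ => Nat.zero_le _]

lemma D_le (σ : Equiv.Perm (Fin (n + 1))) (c : ℕ) : D σ c ≤ desc σ := by
  rw [D, desc_eq]; exact Finset.card_filter_le _ _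

lemma D_last (σ : Equiv.Perm (Fin (n + 1))) : D σ n = 0 := by
  rw [D, Finset.card_eq_zero, Finset.filter_eq_empty_iff]
  intro j _
  simp only [not_le]
  exact j.isLt

lemma D_succ (σ : Equiv.Perm (Fin (n + 1))) (i : Fin n) :
    D σ (i : ℕ) = D σ ((i : ℕ) + 1) + (if i ∈ DS σ then 1 else 0) := by
  rw [D, D]
  have hsplit : ((DS σ).filter fun j : Fin n => (i : ℕ) ≤ (j : ℕ)) =
      ((DS σ).filter fun j : Fin n => (i : ℕ) + 1 ≤ (j : ℕ)) ∪
        ((DS σ).filter fun j : Fin n => j = i) := by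
    rw [← Finset.filter_or]
    apply Finset.filter_congr
    intro j _
    constructor
    · intro h
      rcases Nat.lt_or_ge (i : ℕ) (j : ℕ) with h' | h'
      · exact Or.inl h'
      · exact Or.inr (Fin.ext (le_antisymm h' h))
    · rintro (h | rfl)
      · omega
      · exact le_refl _
  rw [hsplit, Finset.card_union_of_disjoint (by
    rw [Finset.disjoint_left]
    intro a ha1 ha2
    simp only [Finset.mem_filter] at ha1 ha2
    have := ha2.2
    subst this
    omega)]
  congr 1
  rw [Finset.filter_eq']
  split <;> simp

lemma D_staircase (σ : Equiv.Perm (Fin (n + 1))) :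
    ∑ x : Fin (n + 1), D σ (x : ℕ) = maj σ := by
  have : ∀ x : Fin (n + 1), D σ (x : ℕ) = ∑ j ∈ DS σ, if (x : ℕ) ≤ (j : ℕ) then 1 else 0 :=
    fun x => by rw [D, Finset.card_filter]
  rw [Finset.sum_congr rfl fun x _ => this x, Finset.sum_comm, maj_eq]
  apply Finset.sum_congr rfl
  intro j _
  rw [Fin.sum_univ_eq_sum_range (fun c => if c ≤ (j : ℕ) then 1 else 0),
    ← Finset.card_filter]
  have : (Finset.range (n + 1)).filter (fun c => c ≤ (j : ℕ)) = Finset.range ((j : ℕ) + 1) := by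
    ext a
    simp only [Finset.mem_filter, Finset.mem_range]
    have := j.isLt
    omega
  rw [this, Finset.card_range]

def sortD (f : Fin (n + 1) → ℕ) : Equiv.Perm (Fin (n + 1)) :=
  Tuple.sort fun x => OrderDual.toDual (f x)

lemma sortD_eq_iff {f : Fin (n + 1) → ℕ} {σ : Equiv.Perm (Fin (n + 1))} :
    sortD f = σ ↔ (Antitone (f ∘ σ) ∧
      ∀ i : Fin n, σ i.succ < σ i.castSucc → f (σ i.succ) < f (σ i.castSucc)) := by
  rw [sortD, eq_comm, Tuple.eq_sort_iff]
  constructor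
  · rintro ⟨hmono, htie⟩
    have hanti : Antitone (f ∘ σ) := fun a b hab => hmono hab
    refine ⟨hanti, fun i hdesc => ?_⟩
    have hle : f (σ i.succ) ≤ f (σ i.castSucc) := hanti (Fin.castSucc_lt_succ (i := i)).le
    rcases hle.lt_or_eq with h | h
    · exact h
    · exact absurd (htie _ _ (Fin.castSucc_lt_succ (i := i)) (OrderDual.toDual_inj.mpr h.symm))
        (not_lt.mpr hdesc.le)
  · rintro ⟨hanti, hdesc⟩
    have hmono : Monotone ((fun x => OrderDual.toDual (f x)) ∘ σ) := fun a b hab => hanti hab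
    refine ⟨hmono, ?_⟩
    -- tie condition: adjacent case, then induction on the gap
    have adj : ∀ a b : Fin (n + 1), (b : ℕ) = (a : ℕ) + 1 →
        f (σ a) = f (σ b) → σ a < σ b := by
      intro a b hab hfeq
      have ha : (a : ℕ) < n := by have := b.isLt; omega
      have hcast : Fin.castSucc ⟨(a : ℕ), ha⟩ = a := by apply Fin.ext; simp
      have hsucc : Fin.succ ⟨(a : ℕ), ha⟩ = b := by apply Fin.ext; simp; omega
      by_contra hcon
      have hne : σ a ≠ σ b := fun h => by
        have : a = b := σ.injective h
        subst this; omega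
      have hlt : σ b < σ a := (not_lt.mp hcon).lt_of_ne (Ne.symm hne)
      have := hdesc ⟨(a : ℕ), ha⟩ (by rw [hcast, hsucc]; exact hlt)
      rw [hcast, hsucc] at this
      omega
    have key : ∀ k : ℕ, ∀ a b : Fin (n + 1), (b : ℕ) = (a : ℕ) + k + 1 →
        f (σ a) = f (σ b) → σ a < σ b := by
      intro k
      induction k with
      | zero => exact fun a b hab hfeq => adj a b (by omega) hfeq
      | succ k IH =>
        intro a b hab hfeq
        have ham : (a : ℕ) + 1 < n + 1 := by have := b.isLt; omega
        set m : Fin (n + 1) := ⟨(a : ℕ) + 1, ham⟩ with hm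
        have h1 : f (σ b) ≤ f (σ m) := hanti (by rw [Fin.le_def]; simp [hm]; omega)
        have h2 : f (σ m) ≤ f (σ a) := hanti (by rw [Fin.le_def]; simp [hm])
        have hfm1 : f (σ a) = f (σ m) := le_antisymm (by omega) h2
        have hfm2 : f (σ m) = f (σ b) := le_antisymm (by omega) h1
        exact lt_trans (adj a m (by simp [hm]) hfm1) (IH m b (by simp [hm]; omega) hfm2)
    intro a b hab hfeq
    have : (b : ℕ) = (a : ℕ) + ((b : ℕ) - (a : ℕ) - 1) + 1 := by
      rw [Fin.lt_def] at hab; omega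
    exact key _ a b this (OrderDual.toDual_inj.mp hfeq)


lemma mem_DS {σ : Equiv.Perm (Fin (n + 1))} {i : Fin n} :
    i ∈ DS σ ↔ σ i.succ < σ i.castSucc := by
  simp [DS]

lemma key_lb {f : Fin (n + 1) → ℕ} {σ : Equiv.Perm (Fin (n + 1))}
    (hanti : Antitone (f ∘ σ))
    (hdesc : ∀ i : Fin n, σ i.succ < σ i.castSucc → f (σ i.succ) < f (σ i.castSucc)) :
    ∀ x : Fin (n + 1), D σ (x : ℕ) ≤ f (σ x) := by
  intro x
  induction x using Fin.reverseInduction with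
  | last => rw [Fin.val_last, D_last]; exact Nat.zero_le _
  | cast i ih =>
    have hd := D_succ σ i
    rw [Fin.val_succ] at ih
    rw [Fin.coe_castSucc]
    by_cases hmem : i ∈ DS σ
    · have hstrict := hdesc i (mem_DS.mp hmem)
      rw [if_pos hmem] at hd
      omega
    · have hle : f (σ i.succ) ≤ f (σ i.castSucc) := hanti (Fin.castSucc_lt_succ (i := i)).le
      rw [if_neg hmem] at hd
      omega

lemma fiber_sum (σ : Equiv.Perm (Fin (n + 1))) (r : ℕ) :
    ∑ f ∈ (Fintype.piFinset fun _ : Fin (n + 1) => Finset.range (r + 1)).filter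
        (fun f => sortD f = σ), (X : R) ^ (∑ x, f x) =
    if desc σ ≤ r then
      (X : R) ^ maj σ * ∑ g ∈ box (n + 1) (r - desc σ), (X : R) ^ (∑ x, g x)
    else 0 := by
  split_ifs with hcase
  · rw [Finset.mul_sum]
    have hrhs : ∀ g ∈ box (n + 1) (r - desc σ),
        (X : R) ^ maj σ * (X : R) ^ (∑ x, g x) = (X : R) ^ (maj σ + ∑ x, g x) :=
      fun g _ => (pow_add _ _ _).symm
    rw [Finset.sum_congr rfl hrhs]
    refine Finset.sum_nbij'
      (fun f => fun x => f (σ x) - D σ (x : ℕ))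
      (fun g => fun y => g (σ⁻¹ y) + D σ ((σ⁻¹ y : Fin (n + 1)) : ℕ))
      ?_ ?_ ?_ ?_ ?_
    · intro f hf
      rw [Finset.mem_filter, Fintype.mem_piFinset] at hf
      obtain ⟨hbound, hsort⟩ := hf
      obtain ⟨hanti, hstrict⟩ := sortD_eq_iff.mp hsort
      have klb := key_lb hanti hstrict
      have hbound' : ∀ x, f x ≤ r := fun x => by
        have := hbound x; rw [Finset.mem_range] at this; omega
      have hganti : Antitone (fun x => f (σ x) - D σ (x : ℕ)) := by
        rw [Fin.antitone_iff_succ_le]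
        intro i
        have hd := D_succ σ i
        have h1 := klb i.succ
        simp only [Fin.coe_castSucc, Fin.val_succ]
        by_cases hmem : i ∈ DS σ
        · have := hstrict i (mem_DS.mp hmem)
          rw [if_pos hmem] at hd
          rw [Fin.val_succ] at h1
          omega
        · have := hanti (Fin.castSucc_lt_succ (i := i)).le
          rw [if_neg hmem] at hd
          rw [Fin.val_succ] at h1
          simp only [Function.comp_apply] at this
          omega
      rw [mem_box]
      refine ⟨fun x => ?_, hganti⟩
      have h0 : (fun x => f (σ x) - D σ (x : ℕ)) x ≤
          (fun x => f (σ x) - D σ (x : ℕ)) 0 := hganti (Fin.zero_le x)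
      have hD0 : D σ ((0 : Fin (n + 1)) : ℕ) = desc σ := D_zero σ
      have := hbound' (σ 0)
      simp only at h0 ⊢
      omega
    · intro g hg
      rw [mem_box] at hg
      obtain ⟨hgb, hganti⟩ := hg
      rw [Finset.mem_filter, Fintype.mem_piFinset]
      constructor
      · intro y
        rw [Finset.mem_range]
        have := hgb (σ⁻¹ y)
        have := D_le σ ((σ⁻¹ y : Fin (n + 1)) : ℕ)
        omega
      · rw [sortD_eq_iff]
        constructor
        · rw [Fin.antitone_iff_succ_le]
          intro i
          simp only [Function.comp_apply, Equiv.Perm.coe_inv, Equiv.symm_apply_apply]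
          have hd := D_succ σ i
          have := hganti (Fin.castSucc_lt_succ (i := i)).le
          simp only [Fin.coe_castSucc, Fin.val_succ]
          by_cases hmem : i ∈ DS σ
          · rw [if_pos hmem] at hd; omega
          · rw [if_neg hmem] at hd; omega
        · intro i hlt
          simp only [Equiv.Perm.coe_inv, Equiv.symm_apply_apply]
          have hmem : i ∈ DS σ := mem_DS.mpr hlt
          have hd := D_succ σ i
          rw [if_pos hmem] at hd
          have := hganti (Fin.castSucc_lt_succ (i := i)).le
          simp only [Fin.coe_castSucc, Fin.val_succ]
          omega
    · intro f hf
      rw [Finset.mem_filter, Fintype.mem_piFinset] at hf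
      obtain ⟨hbound, hsort⟩ := hf
      obtain ⟨hanti, hstrict⟩ := sortD_eq_iff.mp hsort
      have klb := key_lb hanti hstrict
      funext y
      have := klb (σ⁻¹ y)
      simp only [Equiv.Perm.coe_inv, Equiv.apply_symm_apply] at this ⊢
      omega
    · intro g hg
      funext x
      simp
    · intro f hf
      rw [Finset.mem_filter, Fintype.mem_piFinset] at hf
      obtain ⟨hbound, hsort⟩ := hf
      obtain ⟨hanti, hstrict⟩ := sortD_eq_iff.mp hsort
      have klb := key_lb hanti hstrict
      dsimp only
      congr 1
      have hsum : ∑ x, f x = ∑ x, f (σ x) := (Equiv.sum_comp σ f).symm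
      rw [hsum, ← D_staircase σ, ← Finset.sum_add_distrib]
      apply Finset.sum_congr rfl
      intro x _
      have := klb x
      omega
  · rw [Finset.filter_eq_empty_iff.mpr, Finset.sum_empty]
    intro f hf
    rw [Fintype.mem_piFinset] at hf
    intro hsort
    obtain ⟨hanti, hstrict⟩ := sortD_eq_iff.mp hsort
    have := key_lb hanti hstrict 0
    rw [show ((0 : Fin (n + 1)) : ℕ) = 0 from rfl, D_zero] at this
    have := hf (σ 0)
    rw [Finset.mem_range] at this
    omega

lemma lemma4 (n : ℕ) :
    (PowerSeries.mk fun r : ℕ =>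
        (∑ i ∈ Finset.range (r + 1), (Polynomial.X : Polynomial ℤ) ^ i) ^ (n + 1)) =
    (∑ σ : Equiv.Perm (Fin (n + 1)),
        PowerSeries.C ((X : R) ^ maj σ) * PowerSeries.X ^ desc σ) *
      ∏ j ∈ Finset.range (n + 1 + 1), geom j := by
  ext r : 1
  rw [PowerSeries.coeff_mk]
  -- LHS into sum over functions
  have hL : (∑ i ∈ Finset.range (r + 1), (X : R) ^ i) ^ (n + 1) =
      ∑ f ∈ Fintype.piFinset fun _ : Fin (n + 1) => Finset.range (r + 1),
        (X : R) ^ (∑ x, f x) := by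
    calc (∑ i ∈ Finset.range (r + 1), (X : R) ^ i) ^ (n + 1)
        = ∏ _x : Fin (n + 1), ∑ i ∈ Finset.range (r + 1), (X : R) ^ i := by
          rw [Finset.prod_const, Finset.card_univ, Fintype.card_fin]
      _ = ∑ f ∈ Fintype.piFinset fun _ : Fin (n + 1) => Finset.range (r + 1),
            ∏ x : Fin (n + 1), (X : R) ^ f x := Finset.prod_univ_sum _ _
      _ = _ := Finset.sum_congr rfl fun f _ => by
          rw [Finset.prod_pow_eq_pow_sum]
  rw [hL, ← Finset.sum_fiberwise_of_maps_to (g := sortD)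
    (fun f _ => Finset.mem_univ (sortD f)) (fun f => (X : R) ^ (∑ x, f x))]
  -- RHS coefficient
  rw [Finset.sum_mul, map_sum]
  apply Finset.sum_congr rfl
  intro σ _
  rw [fiber_sum σ r]
  rw [mul_right_comm, PowerSeries.coeff_mul_X_pow']
  split_ifs with h
  · rw [PowerSeries.coeff_C_mul, coeff_Q]
  · rfl

end MC1
end

/-- MacMahon–Carlitz: for every `d ≥ 1`,
`(∑_{r≥0} ([r+1]_q)^d t^r) · ∏_{j=0}^d (1−qʲt) = ∑_{σ ∈ S_d} q^{maj σ} t^{desc σ}`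
in `ℤ[q][[t]]`. -/
theorem macmahon_carlitz (d : ℕ) (hd : 1 ≤ d) :
    (PowerSeries.mk fun r : ℕ =>
        (∑ i ∈ Finset.range (r + 1), (Polynomial.X : Polynomial ℤ) ^ i) ^ d) *
      ∏ j ∈ Finset.range (d + 1),
        (1 - (PowerSeries.C : Polynomial ℤ →+* PowerSeries (Polynomial ℤ)) (Polynomial.X ^ j) * PowerSeries.X) =
    ∑ σ : Equiv.Perm (Fin d),
      (PowerSeries.C : Polynomial ℤ →+* PowerSeries (Polynomial ℤ)) (Polynomial.X ^ maj σ) * PowerSeries.X ^ desc σ := by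
  obtain ⟨n, rfl⟩ : ∃ n, d = n + 1 := ⟨d - 1, by omega⟩
  rw [MC1.lemma4 n, mul_assoc, mul_comm (∏ j ∈ Finset.range (n + 1 + 1), MC1.geom j),
    MC1.PQ, mul_one]
end

section
/- Let d ≥ 1, let S = ℂ[x_v : v ∈ {0,1}^d], let I_{C_d} ⊆ S be the ideal generated by all binomials x_v x_w − x_{v'} x_{w'} with v + w = v' + w' in ℤ^d, let R_{C_d} = S/I_{C_d}, and for 0 ≤ k ≤ d let y_k = ∑_{v ∈ {0,1}^d, v_1+⋯+v_d = k} x_v. Then the quotient ring T_{C_d} = R_{C_d}/([y_0], [y_1], …, [y_d]) is a finite-dimensional ℂ-vector space. -/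
open MvPolynomial

/-- The toric ideal `I_{C_d}` of the embedding `(ℙ¹)^d ↪ ℙ^{2^d−1}`, inside the polynomial
ring `S = ℂ[x_v : v ∈ {0,1}^d]`: it is generated by the binomials
`x_v x_w − x_{v'} x_{w'}` with `v + w = v' + w'` componentwise in `ℤ^d`. -/
noncomputable def cubeIdeal (d : ℕ) : Ideal (MvPolynomial (Fin d → Fin 2) ℂ) :=
  Ideal.span { p | ∃ v w v' w' : Fin d → Fin 2,
    (∀ i, (v i : ℕ) + (w i : ℕ) = (v' i : ℕ) + (w' i : ℕ)) ∧
    p = X v * X w - X v' * X w' }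

/-- The element `y_k ∈ S`: the sum of all variables `x_v` with coordinate sum
`v₁ + ⋯ + v_d = k`. -/
noncomputable def cubeY (d k : ℕ) : MvPolynomial (Fin d → Fin 2) ℂ :=
  ∑ v ∈ Finset.univ.filter (fun v : Fin d → Fin 2 => ∑ i, (v i : ℕ) = k), X v

section Aux

variable {d : ℕ}

/-- The full ideal `J = I_{C_d} + (y_0,…,y_d)`. -/
noncomputable def cubeJ (d : ℕ) : Ideal (MvPolynomial (Fin d → Fin 2) ℂ) :=
  cubeIdeal d ⊔ Ideal.span ((fun j : Fin (d + 1) => cubeY d j) '' Set.univ)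

/-- In the quotient by `J`, `x_v x_w = x_{v∧w} x_{v∨w}`. -/
lemma cube_mul_eq (v w : Fin d → Fin 2) :
    Ideal.Quotient.mk (cubeJ d) (X v * X w) =
      Ideal.Quotient.mk (cubeJ d)
        (X (fun i => min (v i) (w i)) * X (fun i => max (v i) (w i))) := by
  rw [Ideal.Quotient.eq]
  refine Ideal.mem_sup_left (Ideal.subset_span ?_)
  refine ⟨v, w, fun i => min (v i) (w i), fun i => max (v i) (w i), fun i => ?_, rfl⟩
  have : ∀ a b : Fin 2, (a : ℕ) + (b : ℕ) = ((min a b : Fin 2) : ℕ) + ((max a b : Fin 2) : ℕ) := by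
    decide
  exact this (v i) (w i)

lemma cubeY_mem (k : ℕ) (hk : k ≤ d) : cubeY d k ∈ cubeJ d := by
  refine Ideal.mem_sup_right (Ideal.subset_span ?_)
  refine ⟨⟨k, Nat.lt_succ_of_le hk⟩, Set.mem_univ _, rfl⟩

lemma min_weight_lt {v w : Fin d → Fin 2} {k : ℕ} (hv : ∑ i, (v i : ℕ) = k)
    (hw : ∑ i, (w i : ℕ) = k) (hne : w ≠ v) :
    ∑ i, ((min (v i) (w i) : Fin 2) : ℕ) < k := by
  have hle : ∀ i ∈ Finset.univ, ((min (v i) (w i) : Fin 2) : ℕ) ≤ (v i : ℕ) := by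
    intro i _
    have : ∀ a b : Fin 2, ((min a b : Fin 2) : ℕ) ≤ (a : ℕ) := by decide
    exact this (v i) (w i)
  rcases lt_or_eq_of_le (Finset.sum_le_sum hle) with h | h
  · omega
  · exfalso
    have hmin : ∀ i ∈ Finset.univ, ((min (v i) (w i) : Fin 2) : ℕ) = (v i : ℕ) :=
      (Finset.sum_eq_sum_iff_of_le hle).1 h
    have hvw : ∀ i ∈ Finset.univ, (v i : ℕ) ≤ (w i : ℕ) := by
      intro i hi
      have := hmin i hi
      have : ∀ a b : Fin 2, ((min a b : Fin 2) : ℕ) = (a : ℕ) → (a : ℕ) ≤ (b : ℕ) := by decide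
      exact this _ _ (hmin i hi)
    have hsum : ∑ i, (v i : ℕ) = ∑ i, (w i : ℕ) := by omega
    have heq : ∀ i ∈ Finset.univ, (v i : ℕ) = (w i : ℕ) :=
      (Finset.sum_eq_sum_iff_of_le hvw).1 hsum
    apply hne
    funext i
    exact Fin.ext ((heq i (Finset.mem_univ i)).symm)

lemma cube_nilpotent (k : ℕ) : ∀ v : Fin d → Fin 2, (∑ i, (v i : ℕ)) = k → k ≤ d →
    IsNilpotent (Ideal.Quotient.mk (cubeJ d) (X v)) := by
  induction k using Nat.strong_induction_on with
  | _ k ih =>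
    intro v hv hkd
    set π := Ideal.Quotient.mk (cubeJ d)
    have hy : π (cubeY d k) = 0 := Ideal.Quotient.eq_zero_iff_mem.2 (cubeY_mem k hkd)
    have hvmem : v ∈ Finset.univ.filter (fun w : Fin d → Fin 2 => ∑ i, (w i : ℕ) = k) := by
      simp [hv]
    have expand : π (X v) * π (cubeY d k) =
        π (X v) ^ 2 + ∑ w ∈ (Finset.univ.filter
          (fun w : Fin d → Fin 2 => ∑ i, (w i : ℕ) = k)).erase v, π (X v) * π (X w) := by
      rw [cubeY, map_sum, Finset.mul_sum,
        ← Finset.add_sum_erase _ (fun w => π (X v) * π (X w)) hvmem, sq]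
    have hsq : π (X v) ^ 2 = -∑ w ∈ (Finset.univ.filter
        (fun w : Fin d → Fin 2 => ∑ i, (w i : ℕ) = k)).erase v, π (X v) * π (X w) := by
      have h0 := expand
      rw [hy, mul_zero] at h0
      exact eq_neg_of_add_eq_zero_left h0.symm
    have hterm : ∀ w ∈ (Finset.univ.filter
        (fun w : Fin d → Fin 2 => ∑ i, (w i : ℕ) = k)).erase v,
        IsNilpotent (π (X v) * π (X w)) := by
      intro w hw
      obtain ⟨hne, hwf⟩ := Finset.mem_erase.1 hw
      have hwk : ∑ i, (w i : ℕ) = k := (Finset.mem_filter.1 hwf).2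
      have hlt := min_weight_lt hv hwk hne
      have hnil : IsNilpotent (π (X (fun i => min (v i) (w i)))) := by
        refine ih _ hlt _ rfl (le_trans (le_of_lt hlt) hkd)
      have : π (X v) * π (X w) =
          π (X (fun i => min (v i) (w i))) * π (X (fun i => max (v i) (w i))) := by
        rw [← map_mul, ← map_mul]; exact cube_mul_eq v w
      rw [this]
      exact (Commute.all _ _).isNilpotent_mul_right hnil
    have : IsNilpotent (π (X v) ^ 2) := by
      rw [hsq, isNilpotent_neg_iff]
      exact isNilpotent_sum hterm
    exact this.of_pow

lemma cube_nilpotent' (v : Fin d → Fin 2) :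
    IsNilpotent (Ideal.Quotient.mk (cubeJ d) (X v)) := by
  refine cube_nilpotent _ v rfl ?_
  calc ∑ i, (v i : ℕ) ≤ ∑ _i : Fin d, 1 := by
        refine Finset.sum_le_sum fun i _ => ?_
        exact Nat.lt_succ_iff.mp (v i).isLt
    _ = d := by simp

end Aux

/-- The quotient `T_{C_d} = R_{C_d}/([y_0],…,[y_d]) = S/(I_{C_d} + (y_0,…,y_d))` is a
finite-dimensional `ℂ`-vector space. -/
theorem cubeT_finiteDimensional (d : ℕ) (hd : 1 ≤ d) :
    FiniteDimensional ℂ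
      (MvPolynomial (Fin d → Fin 2) ℂ ⧸
        (cubeIdeal d ⊔ Ideal.span ((fun j : Fin (d + 1) => cubeY d j) '' Set.univ))) := by
  show Module.Finite ℂ (MvPolynomial (Fin d → Fin 2) ℂ ⧸ cubeJ d)
  set A := MvPolynomial (Fin d → Fin 2) ℂ ⧸ cubeJ d
  let f : MvPolynomial (Fin d → Fin 2) ℂ →ₐ[ℂ] A := Ideal.Quotient.mkₐ ℂ (cubeJ d)
  have hsurj : Function.Surjective f := Ideal.Quotient.mkₐ_surjective ℂ _
  have hft : Algebra.FiniteType ℂ A :=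
    Algebra.FiniteType.of_surjective f hsurj
  have hint : Algebra.IsIntegral ℂ A := by
    constructor
    intro x
    have hadj : Algebra.adjoin ℂ (f '' Set.range (X : (Fin d → Fin 2) → _)) = ⊤ := by
      rw [← AlgHom.map_adjoin, MvPolynomial.adjoin_range_X, Algebra.map_top,
        AlgHom.range_eq_top]
      exact hsurj
    have hle : Algebra.adjoin ℂ (f '' Set.range (X : (Fin d → Fin 2) → _)) ≤
        integralClosure ℂ A := by
      refine Algebra.adjoin_le ?_
      rintro _ ⟨_, ⟨v, rfl⟩, rfl⟩
      obtain ⟨n, hn⟩ := cube_nilpotent' v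
      refine ⟨Polynomial.X ^ (n + 1), Polynomial.monic_X_pow _, ?_⟩
      have : f (X v) = Ideal.Quotient.mk (cubeJ d) (X v) := rfl
      simp [Polynomial.eval₂_X_pow, this, pow_succ, hn]
    have : x ∈ integralClosure ℂ A := hle (hadj ▸ Algebra.mem_top)
    exact this
  exact Algebra.IsIntegral.finite
end
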